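/- arXiv:1901.03007 — 5 statements merged into one kernel-verified Lean document; each statement's English description precedes it below -/
import Mathlib

section
/- Suppose K : (0,∞) → [0,∞) is locally integrable, eventually decreasing with K(t) → 0 at infinity, and there exist α ∈ (0,1), C_α > 0, β_α > 0 with |t^α K(t) − C_α| = O(t^{-β_α}) as t → ∞. Then, with γ_α = min{1−α, α·β_α}, one has |ω^{1−α} K_sin(ω) − C_α ∫₀^∞ sin(z)/z^α dz| = O(ω^{γ_α}) as ω → 0⁺. -/
open MeasureTheory Filter Set Real Asymptotics
open scoped Interval

lemma sin_abs_le_one (x : ℝ) : |Real.sin x| ≤ 1 :=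
  abs_le.2 ⟨Real.neg_one_le_sin x, Real.sin_le_one x⟩

lemma sin_omega_cont (ω : ℝ) : Continuous (fun t : ℝ => Real.sin (ω * t)) :=
  Real.continuous_sin.comp (continuous_const.mul continuous_id)

lemma osc_bound (g : ℝ → ℝ) (a ω b : ℝ) (hω : 0 < ω) (hab : a ≤ b)
    (hg : AntitoneOn g (Ici a)) (hg0 : ∀ t ∈ Ici a, 0 ≤ g t)
    (hgi : ∀ c d, a ≤ c → a ≤ d → IntervalIntegrable g volume c d) :
    |∫ t in a..b, g t * Real.sin (ω * t)| ≤ 3 * π / (2 * ω) * g a := by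
  have hπ := Real.pi_pos
  set h := π / ω with hh
  have hh0 : 0 < h := div_pos hπ hω
  have hga : 0 ≤ g a := hg0 a (Set.self_mem_Ici)
  have key : 3 * π / (2 * ω) * g a = 3 / 2 * h * g a := by
    rw [hh]; ring
  have hbound : ∀ c d, a ≤ c → c ≤ d → |∫ t in c..d, g t * Real.sin (ω * t)| ≤ (d - c) * g c := by
    intro c d hac hcd
    have hgc : 0 ≤ g c := hg0 c hac
    have hp : ∀ x ∈ Ι c d, ‖g x * Real.sin (ω * x)‖ ≤ g c := by
      intro x hx
      rw [Set.uIoc_of_le hcd] at hx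
      have hax : a ≤ x := hac.trans hx.1.le
      calc ‖g x * Real.sin (ω * x)‖ = |g x| * |Real.sin (ω * x)| := abs_mul _ _
        _ ≤ g c * 1 := by
            refine mul_le_mul ?_ (sin_abs_le_one _) (abs_nonneg _) hgc
            rw [abs_of_nonneg (hg0 x hax)]
            exact hg hac hax hx.1.le
        _ = g c := mul_one _
    calc |∫ t in c..d, g t * Real.sin (ω * t)| ≤ g c * |d - c| :=
          intervalIntegral.norm_integral_le_of_norm_le_const hp
      _ = (d - c) * g c := by rw [abs_of_nonneg (by linarith)]; ring
  rcases le_or_gt b (a + h) with hbh | hbh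
  · calc |∫ t in a..b, g t * Real.sin (ω * t)| ≤ (b - a) * g a := hbound a b le_rfl hab
      _ ≤ 3 / 2 * h * g a := by nlinarith
      _ = 3 * π / (2 * ω) * g a := key.symm
  · -- b > a + h
    have hgiS : ∀ c d, a ≤ c → a ≤ d →
        IntervalIntegrable (fun t => g t * Real.sin (ω * t)) volume c d := by
      intro c d h1 h2
      exact (hgi c d h1 h2).mul_continuousOn (sin_omega_cont ω).continuousOn
    have habh : a ≤ a + h := by linarith
    have hahb : a + h ≤ b := hbh.le
    have hab' : a ≤ b := hab
    have hbh' : a ≤ b - h := by linarith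
    have hbhb : b - h ≤ b := by linarith
    have hgh : IntervalIntegrable (fun u => g (u + h)) volume a (b - h) := by
      have h2 := (hgi (a + h) b habh hab').comp_add_right h
      have e0 : a + h - h = a := by ring
      rwa [e0] at h2
    have hghS : IntervalIntegrable (fun u => g (u + h) * Real.sin (ω * u)) volume a (b - h) :=
      hgh.mul_continuousOn (sin_omega_cont ω).continuousOn
    have e1 : (∫ t in (a+h)..b, g t * Real.sin (ω * t))
        = - ∫ u in a..(b-h), g (u + h) * Real.sin (ω * u) := by
      have h2 := intervalIntegral.integral_comp_add_right
        (a := a) (b := b - h) (fun t => g t * Real.sin (ω * t)) h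
      have e2 : b - h + h = b := by ring
      rw [e2] at h2
      rw [← h2, ← intervalIntegral.integral_neg]
      apply intervalIntegral.integral_congr
      intro u _
      have e3 : ω * (u + h) = ω * u + π := by
        rw [hh]; field_simp
      simp only [e3, Real.sin_add_pi]
      ring
    have e2 : (∫ t in a..b, g t * Real.sin (ω * t))
        = (∫ t in a..(a+h), g t * Real.sin (ω * t)) + ∫ t in (a+h)..b, g t * Real.sin (ω * t) :=
      (intervalIntegral.integral_add_adjacent_intervals
        (hgiS a (a+h) le_rfl habh) (hgiS (a+h) b habh hab')).symm
    have e3 : (∫ t in a..(b-h), g t * Real.sin (ω * t))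
        = (∫ t in a..b, g t * Real.sin (ω * t)) - ∫ t in (b-h)..b, g t * Real.sin (ω * t) := by
      have := intervalIntegral.integral_add_adjacent_intervals
        (hgiS a (b-h) le_rfl hbh') (hgiS (b-h) b hbh' hab')
      linarith
    have eD : (∫ u in a..(b-h), (g u - g (u + h)) * Real.sin (ω * u))
        = (∫ t in a..(b-h), g t * Real.sin (ω * t))
          - ∫ u in a..(b-h), g (u + h) * Real.sin (ω * u) := by
      rw [← intervalIntegral.integral_sub (hgiS a (b-h) le_rfl hbh') hghS]
      apply intervalIntegral.integral_congr
      intro u _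
      ring
    set I := ∫ t in a..b, g t * Real.sin (ω * t) with hI
    set A1 := ∫ t in a..(a+h), g t * Real.sin (ω * t) with hA1
    set A2 := ∫ t in (b-h)..b, g t * Real.sin (ω * t) with hA2
    set Dd := ∫ u in a..(b-h), (g u - g (u + h)) * Real.sin (ω * u) with hDd
    have e2I : 2 * I = A1 + A2 + Dd := by linarith
    have bA1 : |A1| ≤ h * g a := by
      have h1 := hbound a (a+h) le_rfl habh
      calc |A1| ≤ (a + h - a) * g a := h1
        _ = h * g a := by ring_nf
    have bA2 : |A2| ≤ h * g a := by
      have h1 := hbound (b-h) b hbh' hbhb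
      have h2 : g (b - h) ≤ g a := hg Set.self_mem_Ici hbh' hbh'
      calc |A2| ≤ (b - (b - h)) * g (b - h) := h1
        _ = h * g (b - h) := by ring_nf
        _ ≤ h * g a := mul_le_mul_of_nonneg_left h2 hh0.le
    -- bound on Dd
    have bDd : |Dd| ≤ h * g a := by
      have hsub : IntervalIntegrable (fun u => g u - g (u + h)) volume a (b - h) :=
        (hgi a (b-h) le_rfl hbh').sub hgh
      have hptw : ∀ᵐ u ∂(volume.restrict (Ι a (b-h))),
          ‖(g u - g (u + h)) * Real.sin (ω * u)‖ ≤ g u - g (u + h) := by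
        refine (MeasureTheory.ae_restrict_mem measurableSet_uIoc).mono (fun u hu => ?_)
        rw [Set.uIoc_of_le hbh'] at hu
        have hau : a ≤ u := hu.1.le
        have hmono : g (u + h) ≤ g u := hg (Set.mem_Ici.2 hau)
          (Set.mem_Ici.2 (by linarith)) (by linarith)
        calc ‖(g u - g (u + h)) * Real.sin (ω * u)‖
            = |g u - g (u + h)| * |Real.sin (ω * u)| := abs_mul _ _
          _ ≤ |g u - g (u + h)| * 1 := by
              exact mul_le_mul_of_nonneg_left (sin_abs_le_one _) (abs_nonneg _)
          _ = g u - g (u + h) := by rw [mul_one, abs_of_nonneg (by linarith)]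
      have hDle := intervalIntegral.norm_integral_le_of_norm_le hbh'
        ((ae_restrict_iff' measurableSet_Ioc).1 (by rwa [Set.uIoc_of_le hbh'] at hptw)) hsub |>.trans (le_abs_self _)
      -- compute/bound the integral of the difference
      have eV : (∫ u in a..(b-h), (g u - g (u + h)))
          = (∫ u in a..(a+h), g u) - ∫ u in (b-h)..b, g u := by
        have eh : (∫ u in a..(b-h), g (u + h)) = ∫ t in (a+h)..b, g t := by
          have h2 := intervalIntegral.integral_comp_add_right (a := a) (b := b - h) g h
          have e0 : b - h + h = b := by ring
          rwa [e0] at h2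
        have ha1 : (∫ u in a..(b-h), g u) + (∫ u in (b-h)..b, g u) = ∫ u in a..b, g u :=
          intervalIntegral.integral_add_adjacent_intervals
            (hgi a (b-h) le_rfl hbh') (hgi (b-h) b hbh' hab')
        have ha2 : (∫ u in a..(a+h), g u) + (∫ u in (a+h)..b, g u) = ∫ u in a..b, g u :=
          intervalIntegral.integral_add_adjacent_intervals
            (hgi a (a+h) le_rfl habh) (hgi (a+h) b habh hab')
        rw [intervalIntegral.integral_sub (hgi a (b-h) le_rfl hbh') hgh, eh]
        linarith
      have hV1 : (∫ u in a..(a+h), g u) ≤ h * g a := by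
        have hmono : ∀ x ∈ Set.Icc a (a+h), g x ≤ (fun _ : ℝ => g a) x := by
          intro x hx
          exact hg Set.self_mem_Ici (Set.mem_Ici.2 hx.1) hx.1
        have := intervalIntegral.integral_mono_on (μ := volume) habh (hgi a (a+h) le_rfl habh)
          (_root_.intervalIntegrable_const (c := g a)) hmono
        calc (∫ u in a..(a+h), g u) ≤ ∫ _ in a..(a+h), g a := this
          _ = h * g a := by rw [intervalIntegral.integral_const]; simp
      have hV2 : 0 ≤ ∫ u in (b-h)..b, g u :=
        intervalIntegral.integral_nonneg hbhb (fun u hu => hg0 u (Set.mem_Ici.2 (hbh'.trans hu.1)))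
      have hVnn : 0 ≤ ∫ u in a..(b-h), (g u - g (u + h)) := by
        apply intervalIntegral.integral_nonneg hbh'
        intro u hu
        have : g (u + h) ≤ g u := hg (Set.mem_Ici.2 hu.1)
          (Set.mem_Ici.2 (by linarith [hu.1])) (by linarith)
        linarith
      calc |Dd| ≤ |∫ u in a..(b-h), (g u - g (u + h))| := hDle
        _ = ∫ u in a..(b-h), (g u - g (u + h)) := abs_of_nonneg hVnn
        _ ≤ h * g a := by rw [eV]; linarith
    have : |2 * I| ≤ 3 * (h * g a) := by
      calc |2 * I| = |A1 + A2 + Dd| := by rw [e2I]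
        _ ≤ |A1| + |A2| + |Dd| := by
            calc |A1 + A2 + Dd| ≤ |A1 + A2| + |Dd| := abs_add_le _ _
              _ ≤ |A1| + |A2| + |Dd| := by linarith [abs_add_le A1 A2]
        _ ≤ 3 * (h * g a) := by linarith
    rw [abs_mul, abs_two] at this
    rw [key]
    linarith [abs_nonneg I]

set_option maxHeartbeats 2000000 in
theorem stmt_9 (K : ℝ → ℝ) (α Cα βα : ℝ)
    (hα : α ∈ Ioo (0:ℝ) 1) (hCα : 0 < Cα) (hβα : 0 < βα)
    (hKnonneg : ∀ t ∈ Ioi (0:ℝ), 0 ≤ K t)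
    (hloc : LocallyIntegrableOn K (Ioi 0))
    (hint0 : IntegrableOn K (Ioc 0 1))
    (hdec : ∃ A > (0:ℝ), AntitoneOn K (Ici A))
    (hK0 : Tendsto K atTop (nhds 0))
    (hrate : (fun t => t ^ α * K t - Cα) =O[atTop] fun t => t ^ (-βα))
    (Ksin : ℝ → ℝ)
    (hKsin : ∀ ω > (0:ℝ),
      Tendsto (fun T => ∫ t in (0:ℝ)..T, K t * Real.sin (ω * t)) atTop (nhds (Ksin ω)))
    (Isin : ℝ)
    (hIsin : Tendsto (fun T => ∫ z in (0:ℝ)..T, Real.sin z / z ^ α) atTop (nhds Isin)) :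
    (fun ω => ω ^ (1 - α) * Ksin ω - Cα * Isin) =O[nhdsWithin 0 (Ioi 0)]
      fun ω => ω ^ min (1 - α) (α * βα) := by
  obtain ⟨hα0, hα1⟩ := hα
  obtain ⟨A, hA0, hAnti⟩ := hdec
  -- extract an explicit rate bound
  rw [Asymptotics.isBigO_iff] at hrate
  obtain ⟨M₀, hM₀⟩ := hrate
  obtain ⟨T₁, hT₁⟩ := Filter.eventually_atTop.mp hM₀
  set M : ℝ := |M₀| + 1 with hM
  have hM0 : 0 < M := by positivity
  set T₀ : ℝ := max (max T₁ A) 1 with hT₀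
  have hT₀1 : (1:ℝ) ≤ T₀ := le_max_right _ _
  have hT₀0 : (0:ℝ) < T₀ := lt_of_lt_of_le one_pos hT₀1
  have hT₀A : A ≤ T₀ := le_trans (le_max_right T₁ A) (le_max_left _ _)
  have hT₀T₁ : T₁ ≤ T₀ := le_trans (le_max_left T₁ A) (le_max_left _ _)
  have hrate' : ∀ t : ℝ, T₀ ≤ t → |t ^ α * K t - Cα| ≤ M * t ^ (-βα) := by
    intro t ht
    have h1 := hT₁ t (hT₀T₁.trans ht)
    have ht0 : (0:ℝ) < t := lt_of_lt_of_le hT₀0 ht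
    have h2 : ‖t ^ (-βα)‖ = t ^ (-βα) := by
      rw [Real.norm_eq_abs, abs_of_nonneg (Real.rpow_nonneg ht0.le _)]
    rw [Real.norm_eq_abs, h2] at h1
    calc |t ^ α * K t - Cα| ≤ M₀ * t ^ (-βα) := h1
      _ ≤ M * t ^ (-βα) := by
          apply mul_le_mul_of_nonneg_right _ (Real.rpow_nonneg ht0.le _)
          rw [hM]; calc M₀ ≤ |M₀| := le_abs_self _
            _ ≤ |M₀| + 1 := by linarith
  -- exponents
  set θ : ℝ := min ((1 - α) / α) βα with hθ
  have hθ0 : 0 < θ := lt_min (div_pos (by linarith) hα0) hβα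
  have hθβ : θ ≤ βα := min_le_right _ _
  set γ : ℝ := α * θ with hγ
  have hγ0 : 0 < γ := mul_pos hα0 hθ0
  have hγmin : γ = min (1 - α) (α * βα) := by
    rw [hγ, hθ, mul_min_of_nonneg _ _ hα0.le]
    congr 1
    field_simp
  have hγ1α : γ ≤ 1 - α := by
    rw [hγmin]; exact min_le_left _ _
  set p : ℝ := 1 + α - βα / θ with hp
  have hβθ1 : 1 ≤ βα / θ := (one_le_div hθ0).2 hθβ
  have hpα : p ≤ α := by rw [hp]; linarith
  have hp1 : 1 - p ≥ 1 - α := by linarith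
  have hp1' : 0 < 1 - p := by linarith
  have hps : p ≤ α + βα := le_trans hpα (by linarith)
  have hkey : θ * (1 - p) = βα - α * θ := by
    rw [hp]; field_simp; ring
  set b' : ℝ := min βα (1 - α) with hb'
  have hb'0 : 0 < b' := lt_min hβα (by linarith)
  have hb'γ : γ ≤ b' := by
    rw [hγmin, hb']
    rw [min_comm βα (1 - α)]
    apply min_le_min le_rfl
    nlinarith
  have hb'1α : b' ≤ 1 - α := min_le_right _ _
  -- integrability of K
  have hKIoc : ∀ T : ℝ, IntegrableOn K (Ioc 0 T) := by
    intro T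
    rcases le_or_gt T 1 with h | h
    · exact hint0.mono_set (Ioc_subset_Ioc_right h)
    · have h1 : Ioc (0:ℝ) T = Ioc 0 1 ∪ Ioc 1 T := by
        rw [Set.Ioc_union_Ioc_eq_Ioc zero_le_one h.le]
      rw [h1]
      apply hint0.union
      have h2 : IsCompact (Icc (1:ℝ) T) := isCompact_Icc
      have h3 : Icc (1:ℝ) T ⊆ Ioi 0 := fun x hx => lt_of_lt_of_le one_pos hx.1
      exact (hloc.integrableOn_compact_subset h3 h2).mono_set Ioc_subset_Icc_self
  have hKint : ∀ c d : ℝ, 0 ≤ c → 0 ≤ d → IntervalIntegrable K volume c d := by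
    intro c d hc hd
    rw [intervalIntegrable_iff]
    apply (hKIoc (max c d)).mono_set
    intro x hx
    exact ⟨lt_of_le_of_lt (le_min hc hd) hx.1, hx.2⟩
  have hPowInt : ∀ (q : ℝ), -1 < q → ∀ c d : ℝ,
      IntervalIntegrable (fun t => t ^ q) volume c d := by
    intro q hq c d
    exact intervalIntegral.intervalIntegrable_rpow' hq
  -- constants
  set CK : ℝ := ∫ t in (0:ℝ)..T₀, (K t + Cα * t ^ (-α)) with hCK
  set Ctot : ℝ := T₀ * |CK| + M + M / (1 - α) + 3 * π / 2 * (Cα + M) + 3 * π / 2 * Cα with hCtot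
  -- main estimate for each small ω
  have main : ∀ ω : ℝ, ω ∈ Ioo 0 T₀⁻¹ →
      |ω ^ (1 - α) * Ksin ω - Cα * Isin| ≤ Ctot * ω ^ γ := by
    intro ω hωmem
    obtain ⟨hω0, hωT⟩ := hωmem
    have hω1 : ω < 1 := lt_of_lt_of_le hωT (by
      rw [inv_le_one_iff₀]; right; exact hT₀1)
    have hωle1 : ω ≤ 1 := hω1.le
    set W : ℝ := ω⁻¹ with hWdef
    have hW0 : 0 < W := inv_pos.2 hω0
    have hT₀W : T₀ ≤ W := by
      have := inv_strictAnti₀ hω0 hωT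
      rw [inv_inv] at this
      exact this.le
    have hWrpow : W = ω ^ (-1 : ℝ) := by rw [Real.rpow_neg_one]
    set S : ℝ := ω ^ (-(1 + θ)) with hSdef
    have hS0 : 0 < S := Real.rpow_pos_of_pos hω0 _
    have hWS : W ≤ S := by
      rw [hWrpow, hSdef]
      exact Real.rpow_le_rpow_of_exponent_ge hω0 hωle1 (by linarith)
    have hT₀S : T₀ ≤ S := hT₀W.trans hWS
    have h1S : (1:ℝ) ≤ S := hT₀1.trans hT₀S
    have hAS : A ≤ S := hT₀A.trans hT₀S
    set f : ℝ → ℝ := fun t => (K t - Cα * t ^ (-α)) * Real.sin (ω * t) with hf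
    have hfi : ∀ c d : ℝ, 0 ≤ c → 0 ≤ d → IntervalIntegrable f volume c d := by
      intro c d hc hd
      exact ((hKint c d hc hd).sub ((hPowInt (-α) (by linarith) c d).const_mul Cα)).mul_continuousOn
        (sin_omega_cont ω).continuousOn
    -- pointwise rate bound in subtracted form
    have hdiff : ∀ t : ℝ, T₀ ≤ t → |K t - Cα * t ^ (-α)| ≤ M * t ^ (-α - βα) := by
      intro t ht
      have ht0 : (0:ℝ) < t := lt_of_lt_of_le hT₀0 ht
      have e1 : K t - Cα * t ^ (-α) = t ^ (-α) * (t ^ α * K t - Cα) := by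
        rw [mul_sub, ← mul_assoc, ← Real.rpow_add ht0]
        simp [mul_comm]
      rw [e1, abs_mul, abs_of_nonneg (Real.rpow_nonneg ht0.le _)]
      calc t ^ (-α) * |t ^ α * K t - Cα| ≤ t ^ (-α) * (M * t ^ (-βα)) :=
            mul_le_mul_of_nonneg_left (hrate' t ht) (Real.rpow_nonneg ht0.le _)
        _ = M * (t ^ (-α) * t ^ (-βα)) := by ring
        _ = M * t ^ (-α - βα) := by rw [← Real.rpow_add ht0]; ring_nf
    -- rpow helpers
    have hωmul : ∀ x y : ℝ, ω ^ x * ω ^ y = ω ^ (x + y) := fun x y =>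
      (Real.rpow_add hω0 x y).symm
    have hωexp : ∀ x : ℝ, γ ≤ x → ω ^ x ≤ ω ^ γ := fun x hx =>
      Real.rpow_le_rpow_of_exponent_ge hω0 hωle1 hx
    have hω1α : (0:ℝ) ≤ ω ^ (1 - α) := Real.rpow_nonneg hω0.le _
    -- Piece 1 : (0, T₀]
    have hP1 : ω ^ (1 - α) * |∫ t in (0:ℝ)..T₀, f t| ≤ T₀ * |CK| * ω ^ γ := by
      have hgint : IntervalIntegrable (fun t => ω * T₀ * (K t + Cα * t ^ (-α))) volume 0 T₀ :=
        ((hKint 0 T₀ le_rfl hT₀0.le).add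
          ((hPowInt (-α) (by linarith) 0 T₀).const_mul Cα)).const_mul (ω * T₀)
      have hptw : ∀ᵐ t ∂(volume.restrict (Ι (0:ℝ) T₀)),
          ‖f t‖ ≤ ω * T₀ * (K t + Cα * t ^ (-α)) := by
        refine (MeasureTheory.ae_restrict_mem measurableSet_uIoc).mono (fun t ht => ?_)
        rw [Set.uIoc_of_le hT₀0.le] at ht
        have ht0 : 0 < t := ht.1
        have hKt : 0 ≤ K t := hKnonneg t ht.1
        have hpow : 0 ≤ Cα * t ^ (-α) := mul_nonneg hCα.le (Real.rpow_nonneg ht0.le _)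
        have h1 : |K t - Cα * t ^ (-α)| ≤ K t + Cα * t ^ (-α) := by
          rw [sub_eq_add_neg]
          refine (abs_add_le _ _).trans ?_
          rw [abs_neg, abs_of_nonneg hKt, abs_of_nonneg hpow]
        have h2 : |Real.sin (ω * t)| ≤ ω * T₀ := by
          refine (Real.abs_sin_le_abs).trans ?_
          rw [abs_of_nonneg (by positivity)]
          exact mul_le_mul_of_nonneg_left ht.2 hω0.le
        calc ‖f t‖ = |K t - Cα * t ^ (-α)| * |Real.sin (ω * t)| := abs_mul _ _
          _ ≤ (K t + Cα * t ^ (-α)) * (ω * T₀) :=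
              mul_le_mul h1 h2 (abs_nonneg _) (by linarith)
          _ = ω * T₀ * (K t + Cα * t ^ (-α)) := by ring
      have h3 := intervalIntegral.norm_integral_le_of_norm_le hT₀0.le
        ((ae_restrict_iff' measurableSet_Ioc).1 (by rwa [Set.uIoc_of_le hT₀0.le] at hptw)) hgint |>.trans (le_abs_self _)
      rw [intervalIntegral.integral_const_mul] at h3
      have h4 : |∫ t in (0:ℝ)..T₀, f t| ≤ ω * (T₀ * |CK|) := by
        calc |∫ t in (0:ℝ)..T₀, f t| ≤ |ω * T₀ * CK| := h3
          _ = ω * (T₀ * |CK|) := by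
              rw [abs_mul, abs_of_nonneg (by positivity : (0:ℝ) ≤ ω * T₀)]; ring
      calc ω ^ (1 - α) * |∫ t in (0:ℝ)..T₀, f t| ≤ ω ^ (1 - α) * (ω * (T₀ * |CK|)) :=
            mul_le_mul_of_nonneg_left h4 hω1α
        _ = T₀ * |CK| * ω ^ (2 - α) := by
            rw [show (2 - α : ℝ) = (1 - α) + 1 by ring, Real.rpow_add hω0, Real.rpow_one]
            ring
        _ ≤ T₀ * |CK| * ω ^ γ := by
            refine mul_le_mul_of_nonneg_left (hωexp _ (by linarith)) (by positivity)
    -- Piece 2 : [T₀, W]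
    have hP2 : ω ^ (1 - α) * |∫ t in T₀..W, f t| ≤ M * ω ^ γ := by
      set q2 : ℝ := 1 - α - b' with hq2def
      have hq2 : 0 ≤ q2 := by rw [hq2def]; linarith
      have hgint : IntervalIntegrable (fun t => M * ω * t ^ q2) volume T₀ W :=
        (hPowInt q2 (by linarith) T₀ W).const_mul (M * ω)
      have hptw : ∀ᵐ t ∂(volume.restrict (Ι T₀ W)),
          ‖f t‖ ≤ M * ω * t ^ q2 := by
        refine (MeasureTheory.ae_restrict_mem measurableSet_uIoc).mono (fun t ht => ?_)
        rw [Set.uIoc_of_le hT₀W] at ht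
        have htT₀ : T₀ ≤ t := ht.1.le
        have ht1 : (1:ℝ) ≤ t := hT₀1.trans htT₀
        have ht0 : (0:ℝ) < t := lt_of_lt_of_le one_pos ht1
        have h2 : |Real.sin (ω * t)| ≤ ω * t := by
          refine (Real.abs_sin_le_abs).trans ?_
          rw [abs_of_nonneg (by positivity)]
        calc ‖f t‖ = |K t - Cα * t ^ (-α)| * |Real.sin (ω * t)| := abs_mul _ _
          _ ≤ M * t ^ (-α - βα) * (ω * t) :=
              mul_le_mul (hdiff t htT₀) h2 (abs_nonneg _)
                (mul_nonneg hM0.le (Real.rpow_nonneg ht0.le _))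
          _ = M * ω * (t ^ (-α - βα) * t ^ (1:ℝ)) := by rw [Real.rpow_one]; ring
          _ = M * ω * t ^ (-α - βα + 1) := by rw [← Real.rpow_add ht0]
          _ ≤ M * ω * t ^ q2 := by
              refine mul_le_mul_of_nonneg_left ?_ (by positivity)
              refine Real.rpow_le_rpow_of_exponent_le ht1 ?_
              have : b' ≤ βα := min_le_left _ _
              rw [hq2def]; linarith
      have h3 := intervalIntegral.norm_integral_le_of_norm_le hT₀W
        ((ae_restrict_iff' measurableSet_Ioc).1 (by rwa [Set.uIoc_of_le hT₀W] at hptw)) hgint |>.trans (le_abs_self _)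
      rw [intervalIntegral.integral_const_mul] at h3
      have h5 : (∫ t in T₀..W, t ^ q2) = (W ^ (q2 + 1) - T₀ ^ (q2 + 1)) / (q2 + 1) :=
        integral_rpow (Or.inl (by linarith))
      have h6 : |∫ t in T₀..W, t ^ q2| ≤ W ^ (q2 + 1) := by
        rw [h5]
        have hmono : T₀ ^ (q2 + 1) ≤ W ^ (q2 + 1) :=
          Real.rpow_le_rpow hT₀0.le hT₀W (by linarith)
        have hnn : (0:ℝ) ≤ T₀ ^ (q2 + 1) := Real.rpow_nonneg hT₀0.le _
        rw [abs_of_nonneg (div_nonneg (by linarith) (by linarith))]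
        calc (W ^ (q2 + 1) - T₀ ^ (q2 + 1)) / (q2 + 1) ≤ W ^ (q2 + 1) / (q2 + 1) := by
              gcongr
              linarith
          _ ≤ W ^ (q2 + 1) := by
              apply div_le_self (Real.rpow_nonneg hW0.le _) (by linarith)
      have h7 : |∫ t in T₀..W, f t| ≤ M * ω * ω ^ (-(q2 + 1)) := by
        calc |∫ t in T₀..W, f t| ≤ |M * ω * ∫ t in T₀..W, t ^ q2| := h3
          _ = M * ω * |∫ t in T₀..W, t ^ q2| := by
              rw [abs_mul, abs_of_nonneg (by positivity : (0:ℝ) ≤ M * ω)]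
          _ ≤ M * ω * W ^ (q2 + 1) := mul_le_mul_of_nonneg_left h6 (by positivity)
          _ = M * ω * ω ^ ((-1) * (q2 + 1)) := by
              rw [hWrpow, ← Real.rpow_mul hω0.le]
          _ = M * ω * ω ^ (-(q2 + 1)) := by norm_num
      calc ω ^ (1 - α) * |∫ t in T₀..W, f t|
          ≤ ω ^ (1 - α) * (M * ω * ω ^ (-(q2 + 1))) := mul_le_mul_of_nonneg_left h7 hω1α
        _ = M * (ω ^ (1 - α) * (ω ^ (1:ℝ) * ω ^ (-(q2 + 1)))) := by
            rw [Real.rpow_one]; ring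
        _ = M * ω ^ b' := by
            rw [hωmul, hωmul]
            congr 1
            rw [hq2def]; ring
        _ ≤ M * ω ^ γ := mul_le_mul_of_nonneg_left (hωexp _ hb'γ) hM0.le
    -- Piece 3 : [W, S]
    have hP3 : ω ^ (1 - α) * |∫ t in W..S, f t| ≤ M / (1 - α) * ω ^ γ := by
      have hpneg : -1 < -p := by linarith
      have hgint : IntervalIntegrable (fun t => M * ω ^ (α + βα - p) * t ^ (-p)) volume W S :=
        (hPowInt (-p) hpneg W S).const_mul _
      have hptw : ∀ᵐ t ∂(volume.restrict (Ι W S)),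
          ‖f t‖ ≤ M * ω ^ (α + βα - p) * t ^ (-p) := by
        refine (MeasureTheory.ae_restrict_mem measurableSet_uIoc).mono (fun t ht => ?_)
        rw [Set.uIoc_of_le hWS] at ht
        have htW : W ≤ t := ht.1.le
        have ht0 : (0:ℝ) < t := lt_of_lt_of_le hW0 htW
        have h1 : |K t - Cα * t ^ (-α)| ≤ M * t ^ (-α - βα) :=
          hdiff t (hT₀W.trans htW)
        have h2 : t ^ (-α - βα) ≤ ω ^ (α + βα - p) * t ^ (-p) := by
          have e1 : t ^ (-α - βα) = t ^ (p - α - βα) * t ^ (-p) := by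
            rw [← Real.rpow_add ht0]; ring_nf
          have e2 : t ^ (p - α - βα) ≤ W ^ (p - α - βα) :=
            Real.rpow_le_rpow_of_nonpos hW0 htW (by linarith)
          have e3 : W ^ (p - α - βα) = ω ^ (α + βα - p) := by
            rw [hWrpow, ← Real.rpow_mul hω0.le]
            congr 1; ring
          rw [e1, ← e3]
          exact mul_le_mul_of_nonneg_right e2 (Real.rpow_nonneg ht0.le _)
        calc ‖f t‖ = |K t - Cα * t ^ (-α)| * |Real.sin (ω * t)| := abs_mul _ _
          _ ≤ M * t ^ (-α - βα) * 1 :=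
              mul_le_mul h1 (sin_abs_le_one _) (abs_nonneg _)
                (mul_nonneg hM0.le (Real.rpow_nonneg ht0.le _))
          _ = M * t ^ (-α - βα) := mul_one _
          _ ≤ M * (ω ^ (α + βα - p) * t ^ (-p)) := mul_le_mul_of_nonneg_left h2 hM0.le
          _ = M * ω ^ (α + βα - p) * t ^ (-p) := by ring
      have h3 := intervalIntegral.norm_integral_le_of_norm_le hWS
        ((ae_restrict_iff' measurableSet_Ioc).1 (by rwa [Set.uIoc_of_le hWS] at hptw)) hgint |>.trans (le_abs_self _)
      rw [intervalIntegral.integral_const_mul] at h3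
      have h5 : (∫ t in W..S, t ^ (-p)) = (S ^ (-p + 1) - W ^ (-p + 1)) / (-p + 1) :=
        integral_rpow (Or.inl hpneg)
      have e7 : (-p + 1 : ℝ) = 1 - p := by ring
      rw [e7] at h5
      have h6 : |∫ t in W..S, t ^ (-p)| ≤ S ^ (1 - p) / (1 - α) := by
        rw [h5]
        have hmono : W ^ (1 - p) ≤ S ^ (1 - p) :=
          Real.rpow_le_rpow hW0.le hWS (by linarith)
        have hnn : (0:ℝ) ≤ W ^ (1 - p) := Real.rpow_nonneg hW0.le _
        have hSnn : (0:ℝ) ≤ S ^ (1 - p) := Real.rpow_nonneg hS0.le _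
        rw [abs_of_nonneg (div_nonneg (by linarith) (by linarith))]
        calc (S ^ (1 - p) - W ^ (1 - p)) / (1 - p) ≤ S ^ (1 - p) / (1 - p) := by
              gcongr <;> linarith
          _ ≤ S ^ (1 - p) / (1 - α) := by
              gcongr <;> linarith
      have h7 : |∫ t in W..S, f t| ≤ M * ω ^ (α + βα - p) * (S ^ (1 - p) / (1 - α)) := by
        calc |∫ t in W..S, f t| ≤ |M * ω ^ (α + βα - p) * ∫ t in W..S, t ^ (-p)| := h3
          _ = M * ω ^ (α + βα - p) * |∫ t in W..S, t ^ (-p)| := by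
              rw [abs_mul, abs_of_nonneg (by positivity : (0:ℝ) ≤ M * ω ^ (α + βα - p))]
          _ ≤ M * ω ^ (α + βα - p) * (S ^ (1 - p) / (1 - α)) :=
              mul_le_mul_of_nonneg_left h6 (by positivity)
      have hSpow : S ^ (1 - p) = ω ^ (-(1 + θ) * (1 - p)) := by
        rw [hSdef, ← Real.rpow_mul hω0.le]
      have hexp3 : (1 - α) + ((α + βα - p) + -(1 + θ) * (1 - p)) = γ := by
        have expand : (1 - α) + ((α + βα - p) + -(1 + θ) * (1 - p)) = βα - θ * (1 - p) := by
          ring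
        rw [expand, hkey, hγ]; ring
      calc ω ^ (1 - α) * |∫ t in W..S, f t|
          ≤ ω ^ (1 - α) * (M * ω ^ (α + βα - p) * (S ^ (1 - p) / (1 - α))) :=
            mul_le_mul_of_nonneg_left h7 hω1α
        _ = M / (1 - α) * (ω ^ (1 - α) * (ω ^ (α + βα - p) * ω ^ (-(1 + θ) * (1 - p)))) := by
            rw [hSpow]; ring
        _ = M / (1 - α) * ω ^ γ := by
            rw [hωmul, hωmul, hexp3]
    -- Piece 4 : [S, T], oscillation bounds
    have hP4 : ∀ T : ℝ, S ≤ T →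
        ω ^ (1 - α) * |∫ t in S..T, f t| ≤ (3 * π / 2 * (Cα + M) + 3 * π / 2 * Cα) * ω ^ γ := by
      intro T hST
      have hT0 : (0:ℝ) ≤ T := hS0.le.trans hST
      have hiK : IntervalIntegrable (fun t => K t * Real.sin (ω * t)) volume S T :=
        (hKint S T hS0.le hT0).mul_continuousOn (sin_omega_cont ω).continuousOn
      have hiP : IntervalIntegrable (fun t => Cα * (t ^ (-α) * Real.sin (ω * t))) volume S T :=
        (((hPowInt (-α) (by linarith) S T)).mul_continuousOn
          (sin_omega_cont ω).continuousOn).const_mul Cα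
      have e4 : (∫ t in S..T, f t) = (∫ t in S..T, K t * Real.sin (ω * t))
          - Cα * ∫ t in S..T, t ^ (-α) * Real.sin (ω * t) := by
        rw [← intervalIntegral.integral_const_mul, ← intervalIntegral.integral_sub hiK hiP]
        apply intervalIntegral.integral_congr
        intro t _
        simp only [hf]
        ring
      -- oscillation bound for K
      have osc1 : |∫ t in S..T, K t * Real.sin (ω * t)| ≤ 3 * π / (2 * ω) * K S := by
        refine osc_bound K S ω T hω0 hST (hAnti.mono (Set.Ici_subset_Ici.2 hAS)) ?_ ?_
        · exact fun t ht => hKnonneg t (lt_of_lt_of_le hS0 ht)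
        · exact fun c d hc hd => hKint c d (hS0.le.trans hc) (hS0.le.trans hd)
      have osc2 : |∫ t in S..T, t ^ (-α) * Real.sin (ω * t)| ≤ 3 * π / (2 * ω) * S ^ (-α) := by
        refine osc_bound (fun t => t ^ (-α)) S ω T hω0 hST ?_ ?_ ?_
        · intro x hx y hy hxy
          exact Real.rpow_le_rpow_of_nonpos (lt_of_lt_of_le hS0 hx) hxy (by linarith)
        · intro t ht
          exact Real.rpow_nonneg (hS0.le.trans ht) _
        · intro c d _ _
          exact hPowInt (-α) (by linarith) c d
      -- rate bound at S
      have hKS : K S ≤ (Cα + M) * S ^ (-α) := by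
        have h1 : |S ^ α * K S - Cα| ≤ M * S ^ (-βα) := hrate' S hT₀S
        have h2 : S ^ (-βα) ≤ 1 := Real.rpow_le_one_of_one_le_of_nonpos h1S (by linarith)
        have h3 : S ^ α * K S ≤ Cα + M := by
          have h1' := (abs_le.1 h1).2
          have h2' : M * S ^ (-βα) ≤ M := by
            calc M * S ^ (-βα) ≤ M * 1 := mul_le_mul_of_nonneg_left h2 hM0.le
              _ = M := mul_one M
          linarith
        have h4 : K S = S ^ (-α) * (S ^ α * K S) := by
          rw [← mul_assoc, ← Real.rpow_add hS0]
          simp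
        rw [h4]
        calc S ^ (-α) * (S ^ α * K S) ≤ S ^ (-α) * (Cα + M) :=
              mul_le_mul_of_nonneg_left h3 (Real.rpow_nonneg hS0.le _)
          _ = (Cα + M) * S ^ (-α) := by ring
      -- combine
      have h8 : |∫ t in S..T, f t| ≤ 3 * π / (2 * ω) * ((Cα + M) * S ^ (-α))
          + Cα * (3 * π / (2 * ω) * S ^ (-α)) := by
        rw [e4]
        have hπω : (0:ℝ) ≤ 3 * π / (2 * ω) := by positivity
        calc |(∫ t in S..T, K t * Real.sin (ω * t))
              - Cα * ∫ t in S..T, t ^ (-α) * Real.sin (ω * t)|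
            ≤ |∫ t in S..T, K t * Real.sin (ω * t)|
              + |Cα * ∫ t in S..T, t ^ (-α) * Real.sin (ω * t)| := abs_sub _ _
          _ ≤ 3 * π / (2 * ω) * ((Cα + M) * S ^ (-α))
              + Cα * (3 * π / (2 * ω) * S ^ (-α)) := by
              have hKS0 : 0 ≤ K S := hKnonneg S hS0
              refine add_le_add ?_ ?_
              · refine osc1.trans (mul_le_mul_of_nonneg_left hKS hπω)
              · rw [abs_mul, abs_of_nonneg hCα.le]
                exact mul_le_mul_of_nonneg_left osc2 hCα.le
      -- rpow algebra : ω^(1-α) * (3π/(2ω)) * S^(-α) = 3π/2 * ω^γ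
      have hωalg : ω ^ (1 - α) * (3 * π / (2 * ω) * S ^ (-α)) = 3 * π / 2 * ω ^ γ := by
        have e1 : S ^ (-α) = ω ^ (-(1 + θ) * (-α)) := by
          rw [hSdef, ← Real.rpow_mul hω0.le]
        have e2 : 3 * π / (2 * ω) = 3 * π / 2 * ω ^ (-1 : ℝ) := by
          rw [Real.rpow_neg_one]
          field_simp
        rw [e1, e2]
        calc ω ^ (1 - α) * (3 * π / 2 * ω ^ (-1:ℝ) * ω ^ (-(1 + θ) * (-α)))
            = 3 * π / 2 * (ω ^ (1 - α) * (ω ^ (-1:ℝ) * ω ^ (-(1 + θ) * (-α)))) := by ring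
          _ = 3 * π / 2 * ω ^ ((1 - α) + ((-1) + -(1 + θ) * (-α))) := by rw [hωmul, hωmul]
          _ = 3 * π / 2 * ω ^ γ := by
              congr 1
              rw [hγ]; ring
      calc ω ^ (1 - α) * |∫ t in S..T, f t|
          ≤ ω ^ (1 - α) * (3 * π / (2 * ω) * ((Cα + M) * S ^ (-α))
            + Cα * (3 * π / (2 * ω) * S ^ (-α))) := mul_le_mul_of_nonneg_left h8 hω1α
        _ = (Cα + M) * (ω ^ (1 - α) * (3 * π / (2 * ω) * S ^ (-α)))
            + Cα * (ω ^ (1 - α) * (3 * π / (2 * ω) * S ^ (-α))) := by ring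
        _ = (3 * π / 2 * (Cα + M) + 3 * π / 2 * Cα) * ω ^ γ := by rw [hωalg]; ring
    -- splitting and total bound for large T
    have hbig : ∀ T : ℝ, S ≤ T → ω ^ (1 - α) * |∫ t in (0:ℝ)..T, f t| ≤ Ctot * ω ^ γ := by
      intro T hST
      have hT0 : (0:ℝ) ≤ T := hS0.le.trans hST
      have i1 : IntervalIntegrable f volume 0 T₀ := hfi 0 T₀ le_rfl hT₀0.le
      have i2 : IntervalIntegrable f volume T₀ W := hfi T₀ W hT₀0.le hW0.le
      have i3 : IntervalIntegrable f volume W S := hfi W S hW0.le hS0.le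
      have i4 : IntervalIntegrable f volume S T := hfi S T hS0.le hT0
      have i12 : IntervalIntegrable f volume 0 W := hfi 0 W le_rfl hW0.le
      have i123 : IntervalIntegrable f volume 0 S := hfi 0 S le_rfl hS0.le
      have e1 := intervalIntegral.integral_add_adjacent_intervals i1 i2
      have e2 := intervalIntegral.integral_add_adjacent_intervals i12 i3
      have e3 := intervalIntegral.integral_add_adjacent_intervals i123 i4
      have habs : |∫ t in (0:ℝ)..T, f t| ≤ |∫ t in (0:ℝ)..T₀, f t| + |∫ t in T₀..W, f t|
          + |∫ t in W..S, f t| + |∫ t in S..T, f t| := by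
        have esplit : (∫ t in (0:ℝ)..T, f t) = (∫ t in (0:ℝ)..T₀, f t) + (∫ t in T₀..W, f t)
            + (∫ t in W..S, f t) + (∫ t in S..T, f t) := by linarith
        rw [esplit]
        have t1 := abs_add_le ((∫ t in (0:ℝ)..T₀, f t) + (∫ t in T₀..W, f t)
          + (∫ t in W..S, f t)) (∫ t in S..T, f t)
        have t2 := abs_add_le ((∫ t in (0:ℝ)..T₀, f t) + (∫ t in T₀..W, f t))
          (∫ t in W..S, f t)
        have t3 := abs_add_le (∫ t in (0:ℝ)..T₀, f t) (∫ t in T₀..W, f t)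
        linarith
      have hsum := hP4 T hST
      calc ω ^ (1 - α) * |∫ t in (0:ℝ)..T, f t|
          ≤ ω ^ (1 - α) * (|∫ t in (0:ℝ)..T₀, f t| + |∫ t in T₀..W, f t|
            + |∫ t in W..S, f t| + |∫ t in S..T, f t|) := mul_le_mul_of_nonneg_left habs hω1α
        _ = ω ^ (1 - α) * |∫ t in (0:ℝ)..T₀, f t| + ω ^ (1 - α) * |∫ t in T₀..W, f t|
            + ω ^ (1 - α) * |∫ t in W..S, f t| + ω ^ (1 - α) * |∫ t in S..T, f t| := by ring
        _ ≤ T₀ * |CK| * ω ^ γ + M * ω ^ γ + M / (1 - α) * ω ^ γ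
            + (3 * π / 2 * (Cα + M) + 3 * π / 2 * Cα) * ω ^ γ := by
            exact add_le_add (add_le_add (add_le_add hP1 hP2) hP3) hsum
        _ = Ctot * ω ^ γ := by rw [hCtot]; ring
    -- substitution identity
    have hGid : ∀ T : ℝ, 0 ≤ T →
        ω ^ (1 - α) * ∫ t in (0:ℝ)..T, t ^ (-α) * Real.sin (ω * t)
          = ∫ z in (0:ℝ)..(ω * T), Real.sin z / z ^ α := by
      intro T hT
      have hcomp := intervalIntegral.integral_comp_mul_left
        (a := (0:ℝ)) (b := T) (f := fun z => Real.sin z / z ^ α) (ne_of_gt hω0)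
      rw [mul_zero, smul_eq_mul] at hcomp
      have hcgr : (∫ x in (0:ℝ)..T, Real.sin (ω * x) / (ω * x) ^ α)
          = ω ^ (-α) * ∫ x in (0:ℝ)..T, x ^ (-α) * Real.sin (ω * x) := by
        rw [← intervalIntegral.integral_const_mul]
        apply intervalIntegral.integral_congr
        intro x hx
        rw [Set.uIcc_of_le hT] at hx
        show Real.sin (ω * x) / (ω * x) ^ α = ω ^ (-α) * (x ^ (-α) * Real.sin (ω * x))
        rcases eq_or_lt_of_le hx.1 with h0 | h0
        · rw [← h0]; simp
        · rw [Real.mul_rpow hω0.le h0.le, Real.rpow_neg hω0.le, Real.rpow_neg h0.le]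
          have hωα : (0:ℝ) < ω ^ α := Real.rpow_pos_of_pos hω0 _
          have hxα : (0:ℝ) < x ^ α := Real.rpow_pos_of_pos h0 _
          field_simp
      have hmain : (∫ z in (0:ℝ)..(ω * T), Real.sin z / z ^ α)
          = ω * (ω ^ (-α) * ∫ x in (0:ℝ)..T, x ^ (-α) * Real.sin (ω * x)) := by
        rw [← hcgr, hcomp]
        field_simp
      have hωpow : ω ^ (1 - α) = ω * ω ^ (-α) := by
        rw [show (1 - α : ℝ) = 1 + (-α) by ring, Real.rpow_add hω0, Real.rpow_one]
      rw [hmain, hωpow]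
      ring
    -- pass to the limit
    have hTmul : Tendsto (fun T : ℝ => ω * T) atTop atTop :=
      Filter.Tendsto.const_mul_atTop hω0 tendsto_id
    have hG : Tendsto (fun T => ω ^ (1 - α) * ∫ t in (0:ℝ)..T, t ^ (-α) * Real.sin (ω * t))
        atTop (nhds Isin) := by
      apply Filter.Tendsto.congr' _ (hIsin.comp hTmul)
      filter_upwards [Filter.eventually_ge_atTop (0:ℝ)] with T hT
      exact (hGid T hT).symm
    have hfid : (fun T => ω ^ (1 - α) * (∫ t in (0:ℝ)..T, K t * Real.sin (ω * t))
          - Cα * (ω ^ (1 - α) * ∫ t in (0:ℝ)..T, t ^ (-α) * Real.sin (ω * t)))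
        =ᶠ[atTop] fun T => ω ^ (1 - α) * ∫ t in (0:ℝ)..T, f t := by
      filter_upwards [Filter.eventually_ge_atTop (0:ℝ)] with T hT
      have iK : IntervalIntegrable (fun t => K t * Real.sin (ω * t)) volume 0 T :=
        (hKint 0 T le_rfl hT).mul_continuousOn (sin_omega_cont ω).continuousOn
      have iP : IntervalIntegrable (fun t => Cα * (t ^ (-α) * Real.sin (ω * t))) volume 0 T :=
        ((hPowInt (-α) (by linarith) 0 T).mul_continuousOn
          (sin_omega_cont ω).continuousOn).const_mul Cα
      have e5 : (∫ t in (0:ℝ)..T, f t) = (∫ t in (0:ℝ)..T, K t * Real.sin (ω * t))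
          - Cα * ∫ t in (0:ℝ)..T, t ^ (-α) * Real.sin (ω * t) := by
        rw [← intervalIntegral.integral_const_mul, ← intervalIntegral.integral_sub iK iP]
        apply intervalIntegral.integral_congr
        intro t _
        simp only [hf]
        ring
      rw [e5]
      ring
    have hDlim : Tendsto (fun T => ω ^ (1 - α) * ∫ t in (0:ℝ)..T, f t) atTop
        (nhds (ω ^ (1 - α) * Ksin ω - Cα * Isin)) := by
      apply Filter.Tendsto.congr' hfid
      exact ((hKsin ω hω0).const_mul _).sub (hG.const_mul Cα)
    have hev : ∀ᶠ T in (atTop : Filter ℝ),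
        |ω ^ (1 - α) * ∫ t in (0:ℝ)..T, f t| ≤ Ctot * ω ^ γ := by
      filter_upwards [Filter.eventually_ge_atTop S] with T hT
      rw [abs_mul, abs_of_nonneg hω1α]
      exact hbig T hT
    exact le_of_tendsto hDlim.abs hev



  -- conclude Big-O
  rw [Asymptotics.isBigO_iff]
  refine ⟨Ctot, ?_⟩
  have hmem : Ioo (0:ℝ) T₀⁻¹ ∈ nhdsWithin 0 (Ioi 0) :=
    Ioo_mem_nhdsGT (by positivity)
  filter_upwards [hmem] with ω hω
  have h1 := main ω hω
  have h2 : ‖ω ^ min (1 - α) (α * βα)‖ = ω ^ γ := by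
    rw [Real.norm_eq_abs, abs_of_nonneg (Real.rpow_nonneg hω.1.le _), hγmin]
  rw [Real.norm_eq_abs, h2]
  exact h1
end

section
/- The improper integral ∫₀^∞ (1 − cos z)/z² dz equals π/2. -/
open MeasureTheory Set Real

/-- Laplace: ∫₀^∞ t e^{-z t} dt = 1/z². -/
lemma aux_lemA {z : ℝ} (hz : 0 < z) :
    (∫ t in Ioi (0:ℝ), t * Real.exp (-(z * t))) = 1 / z ^ 2 := by
  have h := Real.integral_rpow_mul_exp_neg_mul_Ioi (a := 2) (r := z) two_pos hz
  rw [Real.Gamma_two, mul_one] at h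
  have h2 : (∫ t in Ioi (0:ℝ), t ^ ((2:ℝ) - 1) * Real.exp (-(z * t)))
      = ∫ t in Ioi (0:ℝ), t * Real.exp (-(z * t)) := by
    refine setIntegral_congr_fun measurableSet_Ioi fun t ht => ?_
    norm_num [Real.rpow_one]
  rw [h2] at h
  rw [h, div_rpow (by norm_num) hz.le, one_rpow, Real.rpow_two, one_div, sq]

lemma aux_intB {t : ℝ} (ht : 0 < t) :
    IntegrableOn (fun z : ℝ => Real.exp (-(t * z)) * (1 - Real.cos z)) (Ioi 0) := by
  have hbound : IntegrableOn (fun z : ℝ => 2 * Real.exp (-t * z)) (Ioi 0) :=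
    (exp_neg_integrableOn_Ioi 0 ht).const_mul 2
  refine Integrable.mono hbound ?_ ?_
  · exact ((Real.continuous_exp.comp (by continuity)).mul
      (continuous_const.sub Real.continuous_cos)).aestronglyMeasurable
  · filter_upwards with z
    rw [Real.norm_eq_abs, Real.norm_eq_abs, abs_mul, Real.abs_exp]
    have h1 : |1 - Real.cos z| ≤ 2 := by
      rw [abs_le]; constructor <;> nlinarith [Real.neg_one_le_cos z, Real.cos_le_one z]
    have : Real.exp (-(t * z)) * |1 - Real.cos z| ≤ Real.exp (-(t * z)) * 2 :=
      mul_le_mul_of_nonneg_left h1 (Real.exp_pos _).le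
    calc Real.exp (-(t * z)) * |1 - Real.cos z| ≤ Real.exp (-(t * z)) * 2 := this
      _ = |2 * Real.exp (-t * z)| := by
          rw [abs_mul, Real.abs_exp, abs_two, neg_mul]; ring

/-- Laplace transform of 1 - cos. -/
lemma aux_lemB {t : ℝ} (ht : 0 < t) :
    (∫ z in Ioi (0:ℝ), Real.exp (-(t * z)) * (1 - Real.cos z))
      = 1 / t - t / (1 + t ^ 2) := by
  have h1t : (1 + t ^ 2) ≠ 0 := by positivity
  set F : ℝ → ℝ := fun z =>
    -Real.exp (-(t * z)) / t - Real.exp (-(t * z)) * (Real.sin z - t * Real.cos z) / (1 + t ^ 2)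
    with hF
  have hderiv : ∀ z ∈ Ici (0:ℝ),
      HasDerivAt F (Real.exp (-(t * z)) * (1 - Real.cos z)) z := by
    intro z _
    have he : HasDerivAt (fun z => Real.exp (-(t * z))) (-t * Real.exp (-(t * z))) z := by
      have : HasDerivAt (fun z : ℝ => -(t * z)) (-t) z := by
        exact ((hasDerivAt_id z).const_mul t).neg.congr_deriv (by ring)
      have h := (Real.hasDerivAt_exp (-(t * z))).comp z this
      exact h.congr_deriv (by ring)
    have hs : HasDerivAt (fun z => Real.sin z - t * Real.cos z)
        (Real.cos z + t * Real.sin z) z := by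
      exact
        ((Real.hasDerivAt_sin z).sub ((Real.hasDerivAt_cos z).const_mul t)).congr_deriv (by ring)
    have h2 : HasDerivAt (fun z => Real.exp (-(t * z)) * (Real.sin z - t * Real.cos z))
        ((-t * Real.exp (-(t * z))) * (Real.sin z - t * Real.cos z)
          + Real.exp (-(t * z)) * (Real.cos z + t * Real.sin z)) z := he.mul hs
    have h3 := ((he.neg.div_const t).sub (h2.div_const (1 + t ^ 2)))
    convert h3 using 1
    · rfl
    · rfl
    · rfl
    field_simp
    ring
  have htend : Filter.Tendsto F Filter.atTop (nhds 0) := by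
    have hb : ∀ z : ℝ, ‖F z‖ ≤ (1 / t + (1 + t) / (1 + t ^ 2)) * Real.exp (-t * z) := by
      intro z
      have hexp := (Real.exp_pos (-(t * z))).le
      have hsc : |Real.sin z - t * Real.cos z| ≤ 1 + t := by
        calc |Real.sin z - t * Real.cos z| ≤ |Real.sin z| + |t * Real.cos z| := abs_sub _ _
          _ ≤ 1 + t := by
              have := Real.abs_sin_le_one z
              have h2 : |t * Real.cos z| ≤ t := by
                rw [abs_mul, abs_of_pos ht]
                nlinarith [Real.abs_cos_le_one z, ht]
              linarith
      rw [hF]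
      have : ‖-Real.exp (-(t * z)) / t
          - Real.exp (-(t * z)) * (Real.sin z - t * Real.cos z) / (1 + t ^ 2)‖
          ≤ Real.exp (-(t * z)) / t
            + Real.exp (-(t * z)) * (1 + t) / (1 + t ^ 2) := by
        calc ‖_ - _‖ ≤ ‖-Real.exp (-(t * z)) / t‖
            + ‖Real.exp (-(t * z)) * (Real.sin z - t * Real.cos z) / (1 + t ^ 2)‖ :=
              norm_sub_le _ _
          _ ≤ _ := by
              rw [Real.norm_eq_abs, Real.norm_eq_abs, abs_div, abs_div, abs_neg,
                Real.abs_exp, abs_of_pos ht, abs_mul, Real.abs_exp,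
                abs_of_pos (show (0:ℝ) < 1 + t ^ 2 by positivity)]
              gcongr
      refine this.trans (le_of_eq ?_)
      rw [neg_mul]
      ring
    have h0 : Filter.Tendsto (fun z => (1 / t + (1 + t) / (1 + t ^ 2)) * Real.exp (-t * z))
        Filter.atTop (nhds 0) := by
      have hlin : Filter.Tendsto (fun z : ℝ => -t * z) Filter.atTop Filter.atBot := by
        have h1 : Filter.Tendsto (fun z : ℝ => t * z) Filter.atTop Filter.atTop :=
          Filter.Tendsto.const_mul_atTop ht Filter.tendsto_id
        exact (Filter.tendsto_neg_atTop_atBot.comp h1).congr fun z => by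
          simp [Function.comp, neg_mul]
      simpa using ((Real.tendsto_exp_atBot).comp hlin).const_mul
        (1 / t + (1 + t) / (1 + t ^ 2))
    exact squeeze_zero_norm hb h0
  have key := integral_Ioi_of_hasDerivAt_of_tendsto' hderiv (aux_intB ht) htend
  rw [key, hF]
  simp only [mul_zero, neg_zero, Real.exp_zero, Real.sin_zero, Real.cos_zero]
  field_simp
  ring

theorem stmt_14 :
    (∫ z in Ioi (0:ℝ), (1 - Real.cos z) / z ^ 2) = π / 2 := by
  set μ := volume.restrict (Ioi (0:ℝ)) with hμ
  set F : ℝ × ℝ → ℝ := fun p => p.1 * Real.exp (-(p.1 * p.2)) * (1 - Real.cos p.2) with hFdef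
  have hFcont : Continuous F := by
    apply Continuous.mul
    · exact continuous_fst.mul (Real.continuous_exp.comp (continuous_fst.mul continuous_snd).neg)
    · exact continuous_const.sub (Real.continuous_cos.comp continuous_snd)
  -- inner integral in z, for fixed t > 0
  have hinner : ∀ t ∈ Ioi (0:ℝ), (∫ z, F (t, z) ∂μ) = (1 + t ^ 2)⁻¹ := by
    intro t ht
    have ht' : (0:ℝ) < t := ht
    have : (∫ z, F (t, z) ∂μ)
        = t * ∫ z in Ioi (0:ℝ), Real.exp (-(t * z)) * (1 - Real.cos z) := by
      rw [hμ, ← integral_const_mul]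
      exact setIntegral_congr_fun measurableSet_Ioi fun z _ => by rw [hFdef]; ring
    rw [this, aux_lemB ht']
    have h1t : (1 + t ^ 2) ≠ 0 := by positivity
    field_simp
    ring
  -- norm of F equals F for t > 0
  have hnorm : ∀ t ∈ Ioi (0:ℝ), ∀ z : ℝ, ‖F (t, z)‖ = F (t, z) := by
    intro t ht z
    rw [Real.norm_eq_abs, abs_of_nonneg]
    have hc : (0:ℝ) ≤ 1 - Real.cos z := by linarith [Real.cos_le_one z]
    exact mul_nonneg (mul_nonneg (le_of_lt ht) (Real.exp_pos _).le) hc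
  -- integrability of F on the product
  have hint : Integrable F (μ.prod μ) := by
    rw [integrable_prod_iff (hFcont.aestronglyMeasurable)]
    constructor
    · rw [hμ]
      filter_upwards [ae_restrict_mem measurableSet_Ioi] with t ht
      have : Integrable (fun z => t * (Real.exp (-(t * z)) * (1 - Real.cos z))) μ :=
        (aux_intB ht).const_mul t
      exact this.congr (Filter.Eventually.of_forall fun z => by rw [hFdef]; ring)
    · have : Integrable (fun t : ℝ => (1 + t ^ 2)⁻¹) μ :=
        integrable_inv_one_add_sq.integrableOn
      refine this.congr ?_
      rw [hμ]
      filter_upwards [ae_restrict_mem measurableSet_Ioi] with t ht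
      rw [show (∫ z, ‖F (t, z)‖ ∂μ) = ∫ z, F (t, z) ∂μ from
        integral_congr_ae (Filter.Eventually.of_forall fun z => hnorm t ht z)]
      exact (hinner t ht).symm
  -- the swap
  have hswap := integral_integral_swap (f := fun t z => F (t, z)) (μ := μ) (ν := μ)
    (by exact hint)
  -- left side of goal equals ∫ z, ∫ t, F
  have hLHS : (∫ z in Ioi (0:ℝ), (1 - Real.cos z) / z ^ 2) = ∫ z, ∫ t, F (t, z) ∂μ ∂μ := by
    rw [hμ]
    refine setIntegral_congr_fun measurableSet_Ioi fun z hz => ?_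
    have hz' : (0:ℝ) < z := hz
    have : (∫ t, F (t, z) ∂μ)
        = (∫ t in Ioi (0:ℝ), t * Real.exp (-(z * t))) * (1 - Real.cos z) := by
      rw [← integral_mul_const]
      exact setIntegral_congr_fun measurableSet_Ioi fun t _ => by rw [hFdef]; ring
    rw [this, aux_lemA hz']
    ring
  rw [hLHS, ← hswap]
  have : (∫ t, ∫ z, F (t, z) ∂μ ∂μ) = ∫ t in Ioi (0:ℝ), (1 + t ^ 2)⁻¹ := by
    rw [hμ]
    exact setIntegral_congr_fun measurableSet_Ioi hinner
  rw [this, integral_Ioi_inv_one_add_sq, Real.arctan_zero, sub_zero]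
end

section
/- For α ∈ (0,1), the improper integral ∫₀^∞ (1 − cos z)/z^{1+α} dz equals −Γ(−α)·cos(απ/2), where Γ(−α) is understood via the functional equation Γ(−α) = Γ(2−α)/((−α)(1−α)). -/
open MeasureTheory Set Real

open Filter Topology


lemma laplace_one_sub_cos {t : ℝ} (ht : 0 < t) :
    ∫ z in Ioi (0:ℝ), (1 - Real.cos z) * Real.exp (-(z * t)) = 1 / (t * (1 + t ^ 2)) := by
  have h1t : (0:ℝ) < 1 + t ^ 2 := by positivity
  set g : ℝ → ℝ := fun z => -Real.exp (-(z*t))/t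
      + Real.exp (-(z*t)) * (t * Real.cos z - Real.sin z) / (1+t^2) with hg
  have hderiv : ∀ z ∈ Ici (0:ℝ), HasDerivAt g ((1 - Real.cos z) * Real.exp (-(z * t))) z := by
    intro z _
    have he : HasDerivAt (fun z : ℝ => Real.exp (-(z*t))) (-t * Real.exp (-(z*t))) z := by
      have : HasDerivAt (fun z : ℝ => -(z*t)) (-t) z := by
        have h := ((hasDerivAt_id z).mul_const t).neg
        simp only [Pi.neg_def, id, one_mul] at h
        exact h
      convert this.exp using 1; ring
    have hc : HasDerivAt (fun z : ℝ => t * Real.cos z - Real.sin z)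
        (t * (-Real.sin z) - Real.cos z) z :=
      ((Real.hasDerivAt_cos z).const_mul t).sub (Real.hasDerivAt_sin z)
    have h2 : HasDerivAt (fun z : ℝ => Real.exp (-(z*t)) * (t * Real.cos z - Real.sin z))
        ((-t * Real.exp (-(z*t))) * (t * Real.cos z - Real.sin z)
          + Real.exp (-(z*t)) * (t * (-Real.sin z) - Real.cos z)) z := he.mul hc
    have := ((he.neg.div_const t).add (h2.div_const (1+t^2)))
    refine this.congr_deriv ?_
    field_simp
    ring
  have g'nonneg : ∀ z ∈ Ioi (0:ℝ), 0 ≤ (1 - Real.cos z) * Real.exp (-(z * t)) := by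
    intro z _
    have h := Real.cos_le_one z
    have := Real.exp_pos (-(z*t))
    nlinarith
  have hlim : Tendsto g atTop (𝓝 0) := by
    have hexp : Tendsto (fun z : ℝ => Real.exp (-(z*t))) atTop (𝓝 0) := by
      apply Real.tendsto_exp_atBot.comp
      apply tendsto_neg_atTop_atBot.comp
      exact Tendsto.atTop_mul_const ht tendsto_id
    have hb : Tendsto (fun z : ℝ => Real.exp (-(z*t)) * (1/t + (t+1)/(1+t^2))) atTop (𝓝 0) := by
      simpa using hexp.mul_const _
    apply squeeze_zero_norm _ hb
    intro z
    have he0 : (0:ℝ) < Real.exp (-(z*t)) := Real.exp_pos _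
    have h1 : ‖t * Real.cos z - Real.sin z‖ ≤ t + 1 := by
      calc ‖t * Real.cos z - Real.sin z‖ ≤ ‖t * Real.cos z‖ + ‖Real.sin z‖ := norm_sub_le _ _
        _ ≤ t * 1 + 1 := by
            gcongr
            · rw [norm_mul, Real.norm_eq_abs, Real.norm_eq_abs, abs_of_nonneg ht.le]
              exact mul_le_mul_of_nonneg_left (Real.abs_cos_le_one z) ht.le
            · exact Real.abs_sin_le_one z
        _ = t + 1 := by ring
    calc ‖g z‖ ≤ ‖-Real.exp (-(z*t))/t‖ + ‖Real.exp (-(z*t)) * (t * Real.cos z - Real.sin z) / (1+t^2)‖ :=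
          norm_add_le _ _
      _ ≤ Real.exp (-(z*t)) * (1/t) + Real.exp (-(z*t)) * ((t+1)/(1+t^2)) := by
          gcongr ?_ + ?_
          · rw [norm_div, norm_neg, Real.norm_eq_abs, Real.norm_eq_abs,
              abs_of_pos he0, abs_of_pos ht, mul_one_div]
          · have hnn : ‖Real.exp (-(z*t)) * (t * Real.cos z - Real.sin z) / (1+t^2)‖
                = Real.exp (-(z*t)) * ‖t * Real.cos z - Real.sin z‖ / (1+t^2) := by
              rw [norm_div, norm_mul, Real.norm_eq_abs (1+t^2), Real.norm_eq_abs (Real.exp _),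
                abs_of_pos he0, abs_of_pos h1t]
            rw [hnn, mul_div_assoc]
            gcongr
      _ = Real.exp (-(z*t)) * (1/t + (t+1)/(1+t^2)) := by ring
  have key := integral_Ioi_of_hasDerivAt_of_nonneg' hderiv g'nonneg hlim
  rw [key, hg]
  simp only [zero_mul, neg_zero, Real.exp_zero, Real.cos_zero, Real.sin_zero]
  field_simp
  ring


lemma sect_t {z a : ℝ} (hz : 0 < z) (ha : -1 < a) :
    IntegrableOn (fun t : ℝ => t ^ a * Real.exp (-(z * t))) (Ioi 0) := by
  have := integrableOn_rpow_mul_exp_neg_mul_rpow ha zero_lt_one hz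
  simpa [Real.rpow_one, neg_mul] using this

lemma base_integrable {α : ℝ} (h0 : 0 < α) (h1 : α < 1) :
    IntegrableOn (fun z : ℝ => (1 - Real.cos z) / z ^ (1 + α)) (Ioi 0) := by
  have hcont : ContinuousOn (fun z : ℝ => (1 - Real.cos z) / z ^ (1 + α)) (Ioi 0) := by
    apply ContinuousOn.div
    · exact (continuous_const.sub Real.continuous_cos).continuousOn
    · exact continuousOn_id.rpow_const fun x hx => Or.inl (ne_of_gt hx)
    · exact fun x hx => (Real.rpow_pos_of_pos hx _).ne'
  have key : Ioc (0:ℝ) 1 ∪ Ioi 1 = Ioi 0 := Ioc_union_Ioi_eq_Ioi zero_le_one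
  rw [← key]
  apply IntegrableOn.union
  · -- bounded by 1/2 on (0,1]
    apply Integrable.mono' (g := fun _ : ℝ => (1:ℝ)/2)
    · exact integrableOn_const measure_Ioc_lt_top.ne
    · exact (hcont.mono Ioc_subset_Ioi_self).aestronglyMeasurable measurableSet_Ioc
    · rw [ae_restrict_iff' measurableSet_Ioc]
      filter_upwards with z hz
      obtain ⟨hz0, hz1⟩ := hz
      have hc : 1 - Real.cos z ≤ z ^ 2 / 2 := by
        have := Real.one_sub_sq_div_two_le_cos (x := z)
        linarith
      have hc0 : 0 ≤ 1 - Real.cos z := by have := Real.cos_le_one z; linarith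
      have hzp : (0:ℝ) < z ^ (1 + α) := Real.rpow_pos_of_pos hz0 _
      rw [Real.norm_eq_abs, abs_of_nonneg (by positivity)]
      rw [div_le_iff₀ hzp]
      calc 1 - Real.cos z ≤ z ^ 2 / 2 := hc
        _ ≤ z ^ (1 + α) / 2 := by
            gcongr
            have : z ^ (2:ℝ) ≤ z ^ (1 + α) := by
              apply Real.rpow_le_rpow_of_exponent_ge hz0 hz1 (by linarith)
            calc z ^ 2 = z ^ (2:ℝ) := by
                  rw [← Real.rpow_natCast z 2]; norm_num
              _ ≤ z ^ (1 + α) := this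
        _ = 1/2 * z ^ (1 + α) := by ring
  · apply Integrable.mono' (g := fun z : ℝ => 2 * z ^ (-(1 + α)))
    · exact (integrableOn_Ioi_rpow_of_lt (by linarith) one_pos).const_mul 2
    · exact (hcont.mono (Ioi_subset_Ioi zero_le_one)).aestronglyMeasurable measurableSet_Ioi
    · rw [ae_restrict_iff' measurableSet_Ioi]
      filter_upwards with z hz
      have hz0 : (0:ℝ) < z := lt_trans one_pos hz
      have hc2 : 1 - Real.cos z ≤ 2 := by have := Real.neg_one_le_cos z; linarith
      have hc0 : 0 ≤ 1 - Real.cos z := by have := Real.cos_le_one z; linarith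
      have hzp : (0:ℝ) < z ^ (1 + α) := Real.rpow_pos_of_pos hz0 _
      rw [Real.norm_eq_abs, abs_of_nonneg (by positivity), Real.rpow_neg hz0.le,
        div_le_iff₀ hzp, mul_assoc, inv_mul_cancel₀ hzp.ne', mul_one]
      exact hc2

lemma ratio_integrable {s : ℝ} (h0 : 0 < s) (h1 : s < 1) :
    IntegrableOn (fun u : ℝ => u ^ (s - 1) / (1 + u)) (Ioi 0) := by
  have hcont : ContinuousOn (fun u : ℝ => u ^ (s - 1) / (1 + u)) (Ioi 0) := by
    apply ContinuousOn.div
    · exact continuousOn_id.rpow_const fun x hx => Or.inl (ne_of_gt hx)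
    · exact (continuous_const.add continuous_id).continuousOn
    · exact fun x hx => by have h' : (0:ℝ) < x := hx; positivity
  have key : Ioc (0:ℝ) 1 ∪ Ioi 1 = Ioi 0 := Ioc_union_Ioi_eq_Ioi zero_le_one
  rw [← key]
  apply IntegrableOn.union
  · apply Integrable.mono' (g := fun u : ℝ => u ^ (s - 1))
    · have : IntervalIntegrable (fun u : ℝ => u ^ (s - 1)) volume 0 1 :=
        intervalIntegral.intervalIntegrable_rpow' (by linarith)
      rwa [intervalIntegrable_iff_integrableOn_Ioc_of_le zero_le_one] at this
    · exact (hcont.mono Ioc_subset_Ioi_self).aestronglyMeasurable measurableSet_Ioc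
    · rw [ae_restrict_iff' measurableSet_Ioc]
      filter_upwards with u hu
      have hu0 : (0:ℝ) < u := hu.1
      have h1u : (1:ℝ) ≤ 1 + u := by linarith
      rw [Real.norm_eq_abs, abs_of_nonneg (by positivity)]
      exact div_le_self (by positivity) h1u
  · apply Integrable.mono' (g := fun u : ℝ => u ^ (s - 2))
    · exact integrableOn_Ioi_rpow_of_lt (by linarith) one_pos
    · exact (hcont.mono (Ioi_subset_Ioi zero_le_one)).aestronglyMeasurable measurableSet_Ioi
    · rw [ae_restrict_iff' measurableSet_Ioi]
      filter_upwards with u hu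
      have hu0 : (0:ℝ) < u := lt_trans one_pos hu
      rw [Real.norm_eq_abs, abs_of_nonneg (by positivity)]
      have : u ^ (s - 1) / (1 + u) ≤ u ^ (s - 1) / u :=
        div_le_div_of_nonneg_left (Real.rpow_nonneg hu0.le _) hu0 (by linarith)
      refine this.trans (le_of_eq ?_)
      rw [← Real.rpow_sub_one hu0.ne']
      norm_num [sub_sub]

lemma exp_integral_Ioi {b : ℝ} (hb : 0 < b) :
    ∫ y in Ioi (0:ℝ), Real.exp (-(b * y)) = 1 / b := by
  have h := Real.integral_rpow_mul_exp_neg_mul_Ioi zero_lt_one hb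
  simpa using h

lemma gamma_scaled {z a : ℝ} (hz : 0 < z) (ha : 0 < a) :
    ∫ t in Ioi (0:ℝ), t ^ (a - 1) * Real.exp (-(z * t)) = (1 / z) ^ a * Real.Gamma a :=
  Real.integral_rpow_mul_exp_neg_mul_Ioi ha hz

lemma mellin_one_add {s : ℝ} (h0 : 0 < s) (h1 : s < 1) :
    ∫ u in Ioi (0:ℝ), u ^ (s - 1) / (1 + u) = Real.Gamma s * Real.Gamma (1 - s) := by
  have hmeas : AEStronglyMeasurable (fun p : ℝ × ℝ => p.1 ^ (s - 1) * Real.exp (-((1 + p.1) * p.2)))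
      ((volume.restrict (Ioi (0:ℝ))).prod (volume.restrict (Ioi (0:ℝ)))) := by
    apply Measurable.aestronglyMeasurable; measurability
  have hval : ∀ u : ℝ, 0 < u →
      (∫ y in Ioi (0:ℝ), u ^ (s - 1) * Real.exp (-((1 + u) * y))) = u ^ (s - 1) / (1 + u) := by
    intro u hu
    have h1u : (0:ℝ) < 1 + u := by linarith
    rw [integral_const_mul, exp_integral_Ioi h1u]
    ring
  have hsect : ∀ u : ℝ, 0 < u →
      IntegrableOn (fun y => u ^ (s - 1) * Real.exp (-((1 + u) * y))) (Ioi 0) := by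
    intro u hu
    have h := (exp_neg_integrableOn_Ioi 0 (show (0:ℝ) < 1 + u by linarith)).const_mul (u ^ (s - 1))
    simpa only [neg_mul, IntegrableOn] using h
  have hInt : Integrable (fun p : ℝ × ℝ => p.1 ^ (s - 1) * Real.exp (-((1 + p.1) * p.2)))
      ((volume.restrict (Ioi (0:ℝ))).prod (volume.restrict (Ioi (0:ℝ)))) := by
    rw [integrable_prod_iff hmeas]
    constructor
    · rw [ae_restrict_iff' measurableSet_Ioi]
      filter_upwards with u hu using hsect u hu
    · apply (ratio_integrable h0 h1).congr
      filter_upwards [ae_restrict_mem measurableSet_Ioi] with u hu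
      have : (∫ y in Ioi (0:ℝ), ‖u ^ (s - 1) * Real.exp (-((1 + u) * y))‖)
          = ∫ y in Ioi (0:ℝ), u ^ (s - 1) * Real.exp (-((1 + u) * y)) := by
        refine setIntegral_congr_fun measurableSet_Ioi fun y _ => ?_
        rw [Real.norm_eq_abs, abs_of_nonneg (mul_nonneg (Real.rpow_nonneg hu.le _) (Real.exp_pos _).le)]
      rw [this, hval u hu]
  have swap := MeasureTheory.integral_integral_swap
    (f := fun u y : ℝ => u ^ (s - 1) * Real.exp (-((1 + u) * y))) hInt
  have lhs_eq : (∫ u in Ioi (0:ℝ), ∫ y in Ioi (0:ℝ), u ^ (s - 1) * Real.exp (-((1 + u) * y)))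
      = ∫ u in Ioi (0:ℝ), u ^ (s - 1) / (1 + u) :=
    setIntegral_congr_fun measurableSet_Ioi fun u hu => hval u hu
  have inner_eq : ∀ y : ℝ, 0 < y →
      (∫ u in Ioi (0:ℝ), u ^ (s - 1) * Real.exp (-((1 + u) * y)))
        = Real.exp (-y) * ((1 / y) ^ s * Real.Gamma s) := by
    intro y hy
    have : ∀ u ∈ Ioi (0:ℝ), u ^ (s - 1) * Real.exp (-((1 + u) * y))
        = Real.exp (-y) * (u ^ (s - 1) * Real.exp (-(y * u))) := by
      intro u _
      rw [show -((1+u)*y) = -y + -(y*u) by ring, Real.exp_add]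
      ring
    rw [setIntegral_congr_fun measurableSet_Ioi this, integral_const_mul,
      gamma_scaled hy h0]
  have rhs_eq : (∫ y in Ioi (0:ℝ), ∫ u in Ioi (0:ℝ), u ^ (s - 1) * Real.exp (-((1 + u) * y)))
      = Real.Gamma s * Real.Gamma (1 - s) := by
    have step : (∫ y in Ioi (0:ℝ), ∫ u in Ioi (0:ℝ), u ^ (s - 1) * Real.exp (-((1 + u) * y)))
        = ∫ y in Ioi (0:ℝ), Real.Gamma s * (y ^ ((1 - s) - 1) * Real.exp (-(1 * y))) := by
      refine setIntegral_congr_fun measurableSet_Ioi fun y hy => ?_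
      rw [inner_eq y hy]
      rw [one_div, Real.inv_rpow (le_of_lt hy), ← Real.rpow_neg (le_of_lt hy)]
      rw [show ((1:ℝ) - s) - 1 = -s by ring, one_mul]
      ring
    rw [step, integral_const_mul, gamma_scaled one_pos (by linarith : (0:ℝ) < 1 - s)]
    simp [Real.one_rpow]
  rw [← lhs_eq, swap, rhs_eq]

lemma gamma_scaled' {z a : ℝ} (hz : 0 < z) (ha : 0 < a) :
    ∫ t in Ioi (0:ℝ), t ^ a * Real.exp (-(z * t)) = (1 / z) ^ (a + 1) * Real.Gamma (a + 1) := by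
  have h := gamma_scaled hz (by linarith : (0:ℝ) < a + 1)
  simpa using h

lemma sub_sq_int {α : ℝ} (h0 : 0 < α) :
    ∫ u in Ioi (0:ℝ), u ^ (α/2 - 1) / (1 + u)
      = 2 * ∫ t in Ioi (0:ℝ), t ^ (α - 1) / (1 + t ^ 2) := by
  rw [← integral_comp_rpow_Ioi_of_pos (g := fun u : ℝ => u ^ (α/2 - 1) / (1 + u)) two_pos,
    ← integral_const_mul]
  refine setIntegral_congr_fun measurableSet_Ioi fun x hx => ?_
  have hx0 : (0:ℝ) < x := hx
  have h2 : x ^ (2:ℝ) = x ^ 2 := by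
    rw [← Real.rpow_natCast x 2]; norm_num
  have hnum : (x ^ (2:ℝ)) ^ (α/2 - 1) = x ^ (α - 2) := by
    rw [← Real.rpow_mul hx0.le]
    congr 1; ring
  have hone : x ^ ((2:ℝ) - 1) = x := by
    norm_num
  have hmul : x * x ^ (α - 2) = x ^ (α - 1) := by
    calc x * x ^ (α - 2) = x ^ (1:ℝ) * x ^ (α - 2) := by rw [Real.rpow_one]
      _ = x ^ (1 + (α - 2)) := (Real.rpow_add hx0 _ _).symm
      _ = x ^ (α - 1) := by congr 1; ring
  rw [smul_eq_mul, hnum, h2, hone, ← hmul]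
  ring

set_option maxHeartbeats 1000000 in
theorem stmt_15 (α : ℝ) (hα : α ∈ Ioo (0:ℝ) 1) :
    (∫ z in Ioi (0:ℝ), (1 - Real.cos z) / z ^ (1 + α)) =
      -(Real.Gamma (2 - α) / ((-α) * (1 - α))) * Real.cos (α * π / 2) := by
  obtain ⟨h0, h1⟩ := hα
  have hα1 : (0:ℝ) < α + 1 := by linarith
  have hG : 0 < Real.Gamma (α + 1) := Real.Gamma_pos_of_pos hα1
  -- pointwise Laplace representation of the kernel
  have rep : ∀ z ∈ Ioi (0:ℝ), (1 - Real.cos z) / z ^ (1 + α)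
      = (Real.Gamma (α + 1))⁻¹
        * ((1 - Real.cos z) * ∫ t in Ioi (0:ℝ), t ^ α * Real.exp (-(z * t))) := by
    intro z hz
    have hz0 : (0:ℝ) < z := hz
    have hzp : (0:ℝ) < z ^ (1 + α) := Real.rpow_pos_of_pos hz0 _
    rw [gamma_scaled' hz0 h0, one_div, ← Real.rpow_neg_one z, ← Real.rpow_mul hz0.le]
    rw [show (-1:ℝ) * (α + 1) = -(1 + α) by ring, Real.rpow_neg hz0.le]
    field_simp
  rw [setIntegral_congr_fun measurableSet_Ioi rep, integral_const_mul]
  -- Fubini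
  have hmeas : AEStronglyMeasurable
      (fun p : ℝ × ℝ => (1 - Real.cos p.1) * (p.2 ^ α * Real.exp (-(p.1 * p.2))))
      ((volume.restrict (Ioi (0:ℝ))).prod (volume.restrict (Ioi (0:ℝ)))) := by
    apply Measurable.aestronglyMeasurable; measurability
  have hnorm_eq : ∀ z : ℝ, 0 < z →
      (∫ t in Ioi (0:ℝ), ‖(1 - Real.cos z) * (t ^ α * Real.exp (-(z * t)))‖)
        = Real.Gamma (α + 1) * ((1 - Real.cos z) / z ^ (1 + α)) := by
    intro z hz0
    have hc0 : (0:ℝ) ≤ 1 - Real.cos z := by have := Real.cos_le_one z; linarith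
    have : ∀ t ∈ Ioi (0:ℝ), ‖(1 - Real.cos z) * (t ^ α * Real.exp (-(z * t)))‖
        = (1 - Real.cos z) * (t ^ α * Real.exp (-(z * t))) := by
      intro t ht
      rw [Real.norm_eq_abs, abs_of_nonneg]
      exact mul_nonneg hc0 (mul_nonneg (Real.rpow_nonneg (le_of_lt ht) _) (Real.exp_pos _).le)
    rw [setIntegral_congr_fun measurableSet_Ioi this, integral_const_mul, gamma_scaled' hz0 h0]
    have hzp : (0:ℝ) < z ^ (1 + α) := Real.rpow_pos_of_pos hz0 _
    rw [one_div, ← Real.rpow_neg_one z, ← Real.rpow_mul hz0.le,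
      show (-1:ℝ) * (α + 1) = -(1 + α) by ring, Real.rpow_neg hz0.le]
    field_simp
  have hInt : Integrable
      (fun p : ℝ × ℝ => (1 - Real.cos p.1) * (p.2 ^ α * Real.exp (-(p.1 * p.2))))
      ((volume.restrict (Ioi (0:ℝ))).prod (volume.restrict (Ioi (0:ℝ)))) := by
    rw [integrable_prod_iff hmeas]
    constructor
    · rw [ae_restrict_iff' measurableSet_Ioi]
      filter_upwards with z hz
      exact (sect_t hz (by linarith : (-1:ℝ) < α)).const_mul _
    · apply ((base_integrable h0 h1).const_mul (Real.Gamma (α + 1))).congr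
      filter_upwards [ae_restrict_mem measurableSet_Ioi] with z hz
      exact (hnorm_eq z hz).symm
  have swap := MeasureTheory.integral_integral_swap
    (f := fun z t : ℝ => (1 - Real.cos z) * (t ^ α * Real.exp (-(z * t)))) hInt
  have lhs_eq : (∫ z in Ioi (0:ℝ), (1 - Real.cos z) * ∫ t in Ioi (0:ℝ), t ^ α * Real.exp (-(z * t)))
      = ∫ z in Ioi (0:ℝ), ∫ t in Ioi (0:ℝ), (1 - Real.cos z) * (t ^ α * Real.exp (-(z * t))) :=
    setIntegral_congr_fun measurableSet_Ioi fun z _ => (integral_const_mul _ _).symm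
  have inner_eq : ∀ t : ℝ, 0 < t →
      (∫ z in Ioi (0:ℝ), (1 - Real.cos z) * (t ^ α * Real.exp (-(z * t))))
        = t ^ (α - 1) / (1 + t ^ 2) := by
    intro t ht
    have e1 : ∀ z ∈ Ioi (0:ℝ), (1 - Real.cos z) * (t ^ α * Real.exp (-(z * t)))
        = t ^ α * ((1 - Real.cos z) * Real.exp (-(z * t))) := fun z _ => by ring
    rw [setIntegral_congr_fun measurableSet_Ioi e1, integral_const_mul, laplace_one_sub_cos ht]
    rw [show t ^ α * (1 / (t * (1 + t ^ 2))) = (t ^ α / t) / (1 + t ^ 2) by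
      field_simp]
    rw [← Real.rpow_sub_one ht.ne']
  have rhs_eq : (∫ t in Ioi (0:ℝ), ∫ z in Ioi (0:ℝ), (1 - Real.cos z) * (t ^ α * Real.exp (-(z * t))))
      = ∫ t in Ioi (0:ℝ), t ^ (α - 1) / (1 + t ^ 2) :=
    setIntegral_congr_fun measurableSet_Ioi fun t ht => inner_eq t ht
  rw [lhs_eq, swap, rhs_eq]
  -- evaluate the t-integral
  have hhalf0 : (0:ℝ) < α/2 := by linarith
  have hhalf1 : α/2 < 1 := by linarith
  have tval : (∫ t in Ioi (0:ℝ), t ^ (α - 1) / (1 + t ^ 2))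
      = (1/2) * (Real.Gamma (α/2) * Real.Gamma (1 - α/2)) := by
    have := sub_sq_int h0
    have h2 := mellin_one_add hhalf0 hhalf1
    rw [h2] at this
    linarith
  rw [tval]
  -- final Gamma algebra
  have hπ := Real.pi_pos
  have hS : 0 < Real.sin (π * (α/2)) := by
    apply Real.sin_pos_of_pos_of_lt_pi
    · positivity
    · nlinarith
  have hC : 0 < Real.cos (π * (α/2)) := by
    apply Real.cos_pos_of_mem_Ioo
    constructor
    · nlinarith
    · nlinarith
  have hGA : 0 < Real.Gamma α := Real.Gamma_pos_of_pos h0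
  have hGB : 0 < Real.Gamma (1 - α) := Real.Gamma_pos_of_pos (by linarith)
  have refl1 : Real.Gamma (α/2) * Real.Gamma (1 - α/2) = π / Real.sin (π * (α/2)) :=
    Real.Gamma_mul_Gamma_one_sub _
  have refl2 : Real.Gamma α * Real.Gamma (1 - α) = π / Real.sin (π * α) :=
    Real.Gamma_mul_Gamma_one_sub _
  have hsin2 : Real.sin (π * α) = 2 * Real.sin (π * (α/2)) * Real.cos (π * (α/2)) := by
    rw [show π * α = 2 * (π * (α/2)) by ring, Real.sin_two_mul]
  have hkey : Real.Gamma α * Real.Gamma (1 - α)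
      * (2 * Real.sin (π * (α/2)) * Real.cos (π * (α/2))) = π := by
    have hsinne : Real.sin (π * α) ≠ 0 := by rw [hsin2]; positivity
    rw [← hsin2, refl2, div_mul_cancel₀ _ hsinne]
  have hGa1 : Real.Gamma (α + 1) = α * Real.Gamma α := Real.Gamma_add_one h0.ne'
  have hG2 : Real.Gamma (2 - α) = (1 - α) * Real.Gamma (1 - α) := by
    rw [show (2:ℝ) - α = (1 - α) + 1 by ring, Real.Gamma_add_one (by linarith : (1:ℝ) - α ≠ 0)]
  have hne1 : (1:ℝ) - α ≠ 0 := by linarith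
  rw [show α * π / 2 = π * (α/2) by ring, refl1, hGa1, hG2]
  set S := Real.sin (π * (α/2)) with hSdef
  set C := Real.cos (π * (α/2)) with hCdef
  set GA := Real.Gamma α with hGAdef
  set GB := Real.Gamma (1 - α) with hGBdef
  field_simp [hS.ne', hC.ne', hGA.ne', hGB.ne', h0.ne', hne1]
  linear_combination (-1) * hkey
end

section
/- Let r̂ : (0,∞) → [0,∞) be bounded and satisfy |r̂(ω) − L| ≤ c ω^{γ₀} for all small ω, with L > 0 and γ₀ ∈ (0,2]. Define M(t) = 4 ∫₀^∞ (1 − cos(tω))/ω² · r̂(ω) dω. Then |M(t)/t − 2πL| = O(t^{-γ₀/2}) as t → ∞. -/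
open MeasureTheory Filter Set Real Asymptotics

section Aux

lemma exp_neg_mul_tendsto (s : ℝ) (hs : 0 < s) :
    Tendsto (fun x => Real.exp (-(s*x))) atTop (nhds 0) := by
  have h1 : Tendsto (fun x : ℝ => -(s*x)) atTop atBot := by
    apply Filter.tendsto_neg_atBot_iff.mpr
    exact Tendsto.const_mul_atTop hs tendsto_id
  exact Real.tendsto_exp_atBot.comp h1

lemma int_exp (s : ℝ) (hs : 0 < s) : ∫ x in Ioi (0:ℝ), Real.exp (-(s*x)) = 1/s := by
  have hderiv : ∀ x ∈ Ici (0:ℝ), HasDerivAt (fun x => -Real.exp (-(s*x))/s) (Real.exp (-(s*x))) x := by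
    intro x _
    have h : HasDerivAt (fun x : ℝ => -(s*x)) (-s) x := by
      simpa using ((hasDerivAt_id x).const_mul (-s))
    have h2 := ((h.exp).neg).div_const s
    refine (h2.congr_deriv ?_)
    field_simp
  have hint : IntegrableOn (fun x => Real.exp (-(s*x))) (Ioi (0:ℝ)) := by
    simpa [neg_mul] using exp_neg_integrableOn_Ioi 0 hs
  have hlim : Tendsto (fun x => -Real.exp (-(s*x))/s) atTop (nhds 0) := by
    simpa using ((exp_neg_mul_tendsto s hs).neg).div_const s
  have := integral_Ioi_of_hasDerivAt_of_tendsto' hderiv hint hlim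
  rw [this]
  simp [div_eq_mul_inv]

lemma int_exp_cos (s : ℝ) (hs : 0 < s) :
    ∫ x in Ioi (0:ℝ), Real.exp (-(s*x)) * Real.cos x = s/(s^2+1) := by
  set F : ℝ → ℝ := fun x => Real.exp (-(s*x)) * (Real.sin x - s * Real.cos x) / (s^2+1) with hF
  have hs1 : (0:ℝ) < s^2 + 1 := by positivity
  have hderiv : ∀ x ∈ Ici (0:ℝ), HasDerivAt F (Real.exp (-(s*x)) * Real.cos x) x := by
    intro x _
    have h : HasDerivAt (fun x : ℝ => -(s*x)) (-s) x := by
      simpa using ((hasDerivAt_id x).const_mul (-s))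
    have he := h.exp
    have hsin : HasDerivAt (fun x => Real.sin x - s * Real.cos x)
        (Real.cos x + s * Real.sin x) x := by
      have := (Real.hasDerivAt_sin x).sub ((Real.hasDerivAt_cos x).const_mul s)
      exact this.congr_deriv (by ring)
    have h2 := ((he.mul hsin).div_const (s^2+1))
    refine (h2.congr_deriv ?_)
    field_simp
    ring
  have hint : IntegrableOn (fun x => Real.exp (-(s*x)) * Real.cos x) (Ioi (0:ℝ)) := by
    have hb : IntegrableOn (fun x => Real.exp (-(s*x))) (Ioi (0:ℝ)) := by
      simpa [neg_mul] using exp_neg_integrableOn_Ioi 0 hs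
    refine hb.mono' ?_ ?_
    · exact ((Real.continuous_exp.comp (continuous_const.mul continuous_id).neg).mul
        Real.continuous_cos).aestronglyMeasurable
    · filter_upwards with x
      rw [norm_mul, Real.norm_eq_abs, Real.norm_eq_abs, abs_of_pos (Real.exp_pos _)]
      nth_rewrite 2 [← mul_one (Real.exp _)]
      exact mul_le_mul_of_nonneg_left (Real.abs_cos_le_one x) (Real.exp_pos _).le
  have hlim : Tendsto F atTop (nhds 0) := by
    have hb : ∀ x : ℝ, |F x| ≤ Real.exp (-(s*x)) * ((1 + s) / (s^2+1)) := by
      intro x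
      rw [hF]
      simp only [abs_div, abs_mul, abs_of_pos (Real.exp_pos _), abs_of_pos hs1]
      rw [mul_div_assoc]
      refine mul_le_mul_of_nonneg_left ?_ (Real.exp_pos _).le
      gcongr
      calc |Real.sin x - s * Real.cos x| ≤ |Real.sin x| + |s * Real.cos x| := abs_sub _ _
        _ ≤ 1 + s := by
            gcongr
            · exact Real.abs_sin_le_one x
            · rw [abs_mul, abs_of_pos hs]
              nth_rewrite 2 [← mul_one s]
              exact mul_le_mul_of_nonneg_left (Real.abs_cos_le_one x) hs.le
    have h0 : Tendsto (fun x => Real.exp (-(s*x)) * ((1 + s) / (s^2+1))) atTop (nhds 0) := by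
      simpa using (exp_neg_mul_tendsto s hs).mul_const ((1 + s) / (s^2+1))
    refine squeeze_zero_norm ?_ h0
    intro x; exact hb x
  have := integral_Ioi_of_hasDerivAt_of_tendsto' hderiv hint hlim
  rw [this, hF]
  simp
  ring

lemma intOn_exp_cos (s : ℝ) (hs : 0 < s) :
    IntegrableOn (fun x => Real.exp (-(s*x)) * Real.cos x) (Ioi (0:ℝ)) := by
  have hb : IntegrableOn (fun x => Real.exp (-(s*x))) (Ioi (0:ℝ)) := by
    simpa [neg_mul] using exp_neg_integrableOn_Ioi 0 hs
  refine hb.mono' ?_ ?_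
  · exact ((Real.continuous_exp.comp (continuous_const.mul continuous_id).neg).mul
      Real.continuous_cos).aestronglyMeasurable
  · filter_upwards with x
    rw [norm_mul, Real.norm_eq_abs, Real.norm_eq_abs, abs_of_pos (Real.exp_pos _)]
    nth_rewrite 2 [← mul_one (Real.exp _)]
    exact mul_le_mul_of_nonneg_left (Real.abs_cos_le_one x) (Real.exp_pos _).le

lemma inner_val (s : ℝ) (hs : 0 < s) :
    ∫ x in Ioi (0:ℝ), s * Real.exp (-(s*x)) * (1 - Real.cos x) = (s^2+1)⁻¹ := by
  have hb : IntegrableOn (fun x => Real.exp (-(s*x))) (Ioi (0:ℝ)) := by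
    simpa [neg_mul] using exp_neg_integrableOn_Ioi 0 hs
  have h1 : ∫ x in Ioi (0:ℝ), s * Real.exp (-(s*x)) * (1 - Real.cos x)
      = s * ∫ x in Ioi (0:ℝ), (Real.exp (-(s*x)) - Real.exp (-(s*x)) * Real.cos x) := by
    rw [← integral_const_mul]
    congr 1; ext x; ring
  rw [h1, integral_sub hb (intOn_exp_cos s hs), int_exp s hs, int_exp_cos s hs]
  have h2 : (0:ℝ) < s^2 + 1 := by positivity
  field_simp
  ring

lemma dirichlet_type : ∫ x in Ioi (0:ℝ), (1 - Real.cos x)/x^2 = π/2 := by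
  set μ := volume.restrict (Ioi (0:ℝ)) with hμ
  set f : ℝ → ℝ → ℝ := fun s x => s * Real.exp (-(s*x)) * (1 - Real.cos x) with hf
  have hcont : Continuous (Function.uncurry f) := by
    apply Continuous.mul
    · exact continuous_fst.mul (Real.continuous_exp.comp (continuous_fst.mul continuous_snd).neg)
    · exact (continuous_const.sub (Real.continuous_cos.comp continuous_snd))
  have hmeas : AEStronglyMeasurable (Function.uncurry f) (μ.prod μ) :=
    hcont.aestronglyMeasurable
  have hnn : ∀ s x : ℝ, 0 ≤ s → 0 ≤ f s x := by
    intro s x hs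
    apply mul_nonneg (mul_nonneg hs (Real.exp_pos _).le)
    simp [Real.cos_le_one]
  have hInt1 : ∀ s : ℝ, 0 < s → Integrable (fun x => f s x) μ := by
    intro s hs
    have hb : IntegrableOn (fun x => Real.exp (-(s*x))) (Ioi (0:ℝ)) := by
      simpa [neg_mul] using exp_neg_integrableOn_Ioi 0 hs
    refine (hb.const_mul (2*s)).mono' ?_ ?_
    · exact (hcont.comp (Continuous.prodMk_right s)).aestronglyMeasurable
    · filter_upwards with x
      rw [hf]
      simp only [Real.norm_eq_abs]
      rw [abs_mul, abs_mul, abs_of_pos hs, abs_of_pos (Real.exp_pos _)]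
      have h2 : |1 - Real.cos x| ≤ 2 := by
        rw [abs_le]; constructor <;> nlinarith [Real.cos_le_one x, Real.neg_one_le_cos x]
      calc s * Real.exp (-(s*x)) * |1 - Real.cos x| ≤ s * Real.exp (-(s*x)) * 2 := by
            apply mul_le_mul_of_nonneg_left h2 (by positivity)
        _ = 2 * s * Real.exp (-(s*x)) := by ring
  have hnorm_val : ∀ s : ℝ, 0 < s → (∫ x, ‖f s x‖ ∂μ) = (s^2+1)⁻¹ := by
    intro s hs
    have : ∀ x, ‖f s x‖ = f s x := fun x => by
      rw [Real.norm_eq_abs, abs_of_nonneg (hnn s x hs.le)]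
    simp_rw [this]
    exact inner_val s hs
  have hIntProd : Integrable (Function.uncurry f) (μ.prod μ) := by
    rw [integrable_prod_iff hmeas]
    constructor
    · filter_upwards [ae_restrict_mem measurableSet_Ioi] with s hs
      exact hInt1 s hs
    · have : Integrable (fun s : ℝ => (s^2+1)⁻¹) μ := by
        have := integrable_inv_one_add_sq.integrableOn (s := Ioi (0:ℝ))
        apply this.congr_fun ?_ measurableSet_Ioi
        intro x _; simp [add_comm]
      apply this.congr
      rw [Filter.EventuallyEq]
      filter_upwards [ae_restrict_mem measurableSet_Ioi] with s hs
      exact (hnorm_val s hs).symm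
  have hswap := integral_integral_swap hIntProd
  have hL : (∫ s, ∫ x, f s x ∂μ ∂μ) = π/2 := by
    have h1 : (∫ s, ∫ x, f s x ∂μ ∂μ) = ∫ s in Ioi (0:ℝ), (s^2+1)⁻¹ := by
      apply setIntegral_congr_fun measurableSet_Ioi
      intro s hs
      exact inner_val s hs
    rw [h1]
    have h2 : ∫ s in Ioi (0:ℝ), (s^2+1)⁻¹ = ∫ s in Ioi (0:ℝ), (1+s^2)⁻¹ := by
      congr 1; ext s; rw [add_comm]
    rw [h2, integral_Ioi_inv_one_add_sq]
    simp [Real.arctan_zero]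
  have hR : (∫ x, ∫ s, f s x ∂μ ∂μ) = ∫ x in Ioi (0:ℝ), (1 - Real.cos x)/x^2 := by
    apply setIntegral_congr_fun measurableSet_Ioi
    intro x hx
    rw [mem_Ioi] at hx
    have key := integral_rpow_mul_exp_neg_mul_Ioi (a := 2) (r := x) (by norm_num) hx
    have h3 : ∫ s in Ioi (0:ℝ), s * Real.exp (-(x*s)) = 1/x^2 := by
      have h4 : ∀ s ∈ Ioi (0:ℝ), s ^ ((2:ℝ)-1) * Real.exp (-(x*s)) = s * Real.exp (-(x*s)) := by
        intro s hs
        norm_num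
      rw [← setIntegral_congr_fun measurableSet_Ioi h4, key, Real.Gamma_two, mul_one]
      rw [show ((2:ℝ)) = ((2:ℕ):ℝ) by norm_num, Real.rpow_natCast]
      rw [div_pow, one_pow]
    have h5 : (∫ s, f s x ∂μ) = (∫ s in Ioi (0:ℝ), s * Real.exp (-(x*s))) * (1 - Real.cos x) := by
      rw [← integral_mul_const]
      apply setIntegral_congr_fun measurableSet_Ioi
      intro s _
      rw [hf]; ring_nf
    simp only []
    rw [h5, h3]; ring
  rw [← hR, ← hswap, hL]

lemma scale_int (t : ℝ) (ht : 0 < t) :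
    ∫ ω in Ioi (0:ℝ), (1 - Real.cos (t*ω))/ω^2 = t * (π/2) := by
  have h := integral_comp_mul_left_Ioi (fun x => (1 - Real.cos x)/x^2) 0 ht
  rw [mul_zero, dirichlet_type] at h
  have h2 : ∫ x in Ioi (0:ℝ), (1 - Real.cos (t*x))/(t*x)^2
      = ∫ x in Ioi (0:ℝ), t⁻¹*t⁻¹ * ((1 - Real.cos (t*x))/x^2) := by
    apply setIntegral_congr_fun measurableSet_Ioi
    intro x hx
    rw [mem_Ioi] at hx
    field_simp
  rw [h2, integral_const_mul, smul_eq_mul] at h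
  have ht' : t ≠ 0 := ht.ne'
  field_simp at h ⊢
  nlinarith [h]

lemma one_sub_cos_nonneg (z : ℝ) : 0 ≤ 1 - Real.cos z := by
  nlinarith [Real.cos_le_one z]

lemma one_sub_cos_le_sq (z : ℝ) : 1 - Real.cos z ≤ z^2/2 := by
  nlinarith [Real.one_sub_sq_div_two_le_cos (x := z)]

lemma one_sub_cos_le_two (z : ℝ) : 1 - Real.cos z ≤ 2 := by
  nlinarith [Real.neg_one_le_cos z]

lemma one_sub_cos_le_rpow {z p : ℝ} (hz : 0 < z) (hp0 : 0 ≤ p) (hp2 : p ≤ 2) :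
    1 - Real.cos z ≤ 2 * z ^ p := by
  rcases le_or_gt 1 z with h | h
  · have h1 : (1:ℝ) ≤ z ^ p := Real.one_le_rpow h hp0
    nlinarith [Real.neg_one_le_cos z]
  · have h2 : z^(2:ℝ) ≤ z ^ p := Real.rpow_le_rpow_of_exponent_ge hz h.le hp2
    have h4 : z^(2:ℝ) = z^(2:ℕ) := by
      rw [← Real.rpow_natCast z 2]; norm_num
    have h5 : 0 ≤ z ^ p := Real.rpow_nonneg hz.le p
    rw [h4] at h2
    have := one_sub_cos_le_sq z
    linarith

lemma integrableOn_kernel {t C : ℝ} (ht : 0 < t) (u : ℝ → ℝ) (hu : Measurable u)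
    (hC : ∀ ω ∈ Ioi (0:ℝ), |u ω| ≤ C) :
    IntegrableOn (fun ω => (1 - Real.cos (t*ω))/ω^2 * u ω) (Ioi (0:ℝ)) := by
  have hmeas : Measurable (fun ω => (1 - Real.cos (t*ω))/ω^2 * u ω) := by
    apply Measurable.mul _ hu
    apply Measurable.div
    · exact measurable_const.sub (Real.measurable_cos.comp (measurable_const_mul t))
    · exact measurable_id.pow_const 2
  have hC0 : 0 ≤ C := le_trans (abs_nonneg _) (hC 1 (by norm_num))
  have hsplit : Ioc (0:ℝ) 1 ∪ Ioi (1:ℝ) = Ioi (0:ℝ) := Ioc_union_Ioi_eq_Ioi (by norm_num)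
  rw [← hsplit]
  apply IntegrableOn.union
  · have hconst : IntegrableOn (fun _ : ℝ => t^2/2 * C) (Ioc (0:ℝ) 1) :=
      integrableOn_const measure_Ioc_lt_top.ne
    apply hconst.mono' hmeas.aestronglyMeasurable.restrict
    filter_upwards [ae_restrict_mem measurableSet_Ioc] with ω hω
    rw [Real.norm_eq_abs, abs_mul]
    have hω0 : 0 < ω := hω.1
    have hg : |(1 - Real.cos (t*ω))/ω^2| ≤ t^2/2 := by
      rw [abs_div, abs_of_nonneg (one_sub_cos_nonneg _), abs_of_nonneg (by positivity : (0:ℝ) ≤ ω^2)]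
      rw [div_le_iff₀ (by positivity)]
      calc 1 - Real.cos (t*ω) ≤ (t*ω)^2/2 := one_sub_cos_le_sq _
        _ = t^2/2 * ω^2 := by ring
    calc |(1 - Real.cos (t*ω))/ω^2| * |u ω| ≤ (t^2/2) * C := by
          apply mul_le_mul hg (hC ω hω.1) (abs_nonneg _) (by positivity)
      _ = t^2/2 * C := rfl
  · have hb : IntegrableOn (fun ω : ℝ => 2*C*ω^(-2:ℝ)) (Ioi (1:ℝ)) :=
      (integrableOn_Ioi_rpow_of_lt (by norm_num) one_pos).const_mul _
    apply hb.mono' hmeas.aestronglyMeasurable.restrict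
    filter_upwards [ae_restrict_mem measurableSet_Ioi] with ω hω
    rw [mem_Ioi] at hω
    have hω0 : (0:ℝ) < ω := lt_trans one_pos hω
    rw [Real.norm_eq_abs, abs_mul]
    have hrw : ω^(-2:ℝ) = (ω^2)⁻¹ := by
      rw [show ((-2:ℝ)) = -((2:ℕ):ℝ) by norm_num, Real.rpow_neg hω0.le, Real.rpow_natCast]
    have hg : |(1 - Real.cos (t*ω))/ω^2| ≤ 2 * (ω^2)⁻¹ := by
      rw [abs_div, abs_of_nonneg (one_sub_cos_nonneg _), abs_of_nonneg (by positivity : (0:ℝ) ≤ ω^2)]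
      rw [div_le_iff₀ (by positivity)]
      calc 1 - Real.cos (t*ω) ≤ 2 := one_sub_cos_le_two _
        _ ≤ 2 * (ω^2)⁻¹ * ω^2 := by rw [inv_mul_cancel_right₀ (by positivity)]
    calc |(1 - Real.cos (t*ω))/ω^2| * |u ω| ≤ (2 * (ω^2)⁻¹) * C := by
          apply mul_le_mul hg (hC ω (lt_trans one_pos hω)) (abs_nonneg _) (by positivity)
      _ = 2*C*ω^(-2:ℝ) := by rw [hrw]; ring

end Aux

theorem stmt_16 (r : ℝ → ℝ) (L c γ₀ ω₀ : ℝ)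
    (hL : 0 < L) (hc : 0 < c) (hγ₀ : γ₀ ∈ Ioc (0:ℝ) 2) (hω₀ : 0 < ω₀)
    (hmeas : Measurable r)
    (hnonneg : ∀ ω ∈ Ioi (0:ℝ), 0 ≤ r ω)
    (hbdd : ∃ B : ℝ, ∀ ω ∈ Ioi (0:ℝ), r ω ≤ B)
    (hrate : ∀ ω : ℝ, 0 < ω → ω < ω₀ → |r ω - L| ≤ c * ω ^ γ₀) :
    (fun t => (4 * ∫ ω in Ioi (0:ℝ), (1 - Real.cos (t * ω)) / ω ^ 2 * r ω) / t
        - 2 * π * L) =O[atTop] fun t => t ^ (-(γ₀ / 2)) := by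
  obtain ⟨B, hB⟩ := hbdd
  obtain ⟨hγ1, hγ2⟩ := hγ₀
  have hB0 : 0 ≤ B := le_trans (hnonneg 1 (by norm_num)) (hB 1 (by norm_num))
  set C₀ := B + L with hC₀
  have habs : ∀ ω ∈ Ioi (0:ℝ), |r ω - L| ≤ C₀ := by
    intro ω hω
    rw [abs_le]; constructor
    · linarith [hnonneg ω hω]
    · linarith [hB ω hω]
  have habsr : ∀ ω ∈ Ioi (0:ℝ), |r ω| ≤ B := by
    intro ω hω; rw [abs_le]; constructor
    · linarith [hnonneg ω hω]
    · exact hB ω hω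
  set θp := 1 - γ₀/2 with hθp
  have hθ0 : 0 ≤ θp := by rw [hθp]; linarith
  have hθ2 : θp ≤ 2 := by rw [hθp]; linarith
  set K := ∫ ω in Ioo (0:ℝ) ω₀, ω ^ (γ₀/2 - 1) with hK
  have hKint : IntegrableOn (fun ω : ℝ => ω ^ (γ₀/2 - 1)) (Ioo (0:ℝ) ω₀) := by
    have h := (intervalIntegrable_iff_integrableOn_Ioc_of_le hω₀.le).mp
      (intervalIntegral.intervalIntegrable_rpow' (a := 0) (b := ω₀) (r := γ₀/2 - 1) (by linarith))
    exact h.mono_set Ioo_subset_Ioc_self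
  have hK0 : 0 ≤ K :=
    setIntegral_nonneg measurableSet_Ioo (fun ω hω => Real.rpow_nonneg hω.1.le _)
  set C₂ := ∫ ω in Ici ω₀, 2*C₀*ω^(-2:ℝ) with hC₂
  have hC₂int : IntegrableOn (fun ω : ℝ => 2*C₀*ω^(-2:ℝ)) (Ici ω₀) := by
    rw [integrableOn_Ici_iff_integrableOn_Ioi]
    exact (integrableOn_Ioi_rpow_of_lt (by norm_num) hω₀).const_mul _
  have hC₂0 : 0 ≤ C₂ := by
    apply setIntegral_nonneg measurableSet_Ici
    intro ω hω
    have : 0 < ω := lt_of_lt_of_le hω₀ hω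
    have hC00 : 0 ≤ C₀ := by rw [hC₀]; linarith
    positivity
  rw [isBigO_iff]
  refine ⟨8*c*K + 4*C₂, ?_⟩
  filter_upwards [eventually_ge_atTop (1:ℝ)] with t ht1
  have ht : (0:ℝ) < t := lt_of_lt_of_le one_pos ht1
  -- integrabilities
  have Ir : IntegrableOn (fun ω => (1 - Real.cos (t*ω))/ω^2 * r ω) (Ioi (0:ℝ)) :=
    integrableOn_kernel ht r hmeas habsr
  have IL : IntegrableOn (fun ω => (1 - Real.cos (t*ω))/ω^2 * L) (Ioi (0:ℝ)) :=
    integrableOn_kernel ht (fun _ => L) measurable_const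
      (fun ω _ => by rw [abs_of_pos hL])
  have IE : IntegrableOn (fun ω => (1 - Real.cos (t*ω))/ω^2 * (r ω - L)) (Ioi (0:ℝ)) :=
    integrableOn_kernel ht (fun ω => r ω - L) (hmeas.sub measurable_const) habs
  set E := ∫ ω in Ioi (0:ℝ), (1 - Real.cos (t*ω))/ω^2 * (r ω - L) with hE
  -- step A : identity
  have hscale : ∫ ω in Ioi (0:ℝ), (1 - Real.cos (t*ω))/ω^2 * L = t * (π/2) * L := by
    rw [integral_mul_const, scale_int t ht]
  have hIdent : (4 * ∫ ω in Ioi (0:ℝ), (1 - Real.cos (t * ω)) / ω ^ 2 * r ω) / t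
      - 2 * π * L = 4 * E / t := by
    have hsub : E = (∫ ω in Ioi (0:ℝ), (1 - Real.cos (t*ω))/ω^2 * r ω)
        - ∫ ω in Ioi (0:ℝ), (1 - Real.cos (t*ω))/ω^2 * L := by
      rw [hE, ← integral_sub Ir IL]
      apply setIntegral_congr_fun measurableSet_Ioi
      intro ω _
      ring
    rw [hsub, hscale]
    field_simp
    ring
  rw [hIdent]
  -- step B : bound on |E|
  have hEbound : |E| ≤ 2*c*t^θp * K + C₂ := by
    have hnorm : |E| ≤ ∫ ω in Ioi (0:ℝ), ‖(1 - Real.cos (t*ω))/ω^2 * (r ω - L)‖ := by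
      rw [hE, ← Real.norm_eq_abs]
      exact norm_integral_le_integral_norm _
    have hsplit : Ioo (0:ℝ) ω₀ ∪ Ici ω₀ = Ioi (0:ℝ) := Ioo_union_Ici_eq_Ioi hω₀
    have hsub1 : Ioo (0:ℝ) ω₀ ⊆ Ioi (0:ℝ) := Ioo_subset_Ioi_self
    have hsub2 : Ici ω₀ ⊆ Ioi (0:ℝ) := fun x hx => lt_of_lt_of_le hω₀ hx
    have hdisj : Disjoint (Ioo (0:ℝ) ω₀) (Ici ω₀) :=
      Set.disjoint_left.mpr (fun x hx hx2 => absurd hx.2 (not_lt.mpr hx2))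
    have hunion : (∫ ω in Ioi (0:ℝ), ‖(1 - Real.cos (t*ω))/ω^2 * (r ω - L)‖)
        = (∫ ω in Ioo (0:ℝ) ω₀, ‖(1 - Real.cos (t*ω))/ω^2 * (r ω - L)‖)
          + ∫ ω in Ici ω₀, ‖(1 - Real.cos (t*ω))/ω^2 * (r ω - L)‖ := by
      rw [← hsplit]
      exact setIntegral_union hdisj measurableSet_Ici
        (IntegrableOn.mono_set IE.norm hsub1) (IntegrableOn.mono_set IE.norm hsub2)
    have hpiece1 : (∫ ω in Ioo (0:ℝ) ω₀, ‖(1 - Real.cos (t*ω))/ω^2 * (r ω - L)‖)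
        ≤ 2*c*t^θp * K := by
      have hb : IntegrableOn (fun ω : ℝ => 2*c*t^θp * ω ^ (γ₀/2 - 1)) (Ioo (0:ℝ) ω₀) :=
        hKint.const_mul _
      have hmono := setIntegral_mono_on (IntegrableOn.mono_set IE.norm hsub1) hb measurableSet_Ioo ?_
      · rw [hK, ← integral_const_mul]
        exact hmono
      · intro ω hω
        obtain ⟨hω1, hω2⟩ := hω
        have htω : 0 < t*ω := by positivity
        have hgle : (1 - Real.cos (t*ω))/ω^2 ≤ 2 * t^θp * ω^(θp - 2) := by
          have h1 : 1 - Real.cos (t*ω) ≤ 2 * (t*ω)^θp := one_sub_cos_le_rpow htω hθ0 hθ2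
          have h2 : (t*ω)^θp = t^θp * ω^θp := Real.mul_rpow ht.le hω1.le
          have h3 : ω^(θp - 2) = ω^θp / ω^2 := by
            rw [Real.rpow_sub hω1, show ((2:ℝ)) = ((2:ℕ):ℝ) by norm_num, Real.rpow_natCast]
          rw [div_le_iff₀ (by positivity), h3]
          calc 1 - Real.cos (t*ω) ≤ 2 * (t*ω)^θp := h1
            _ = 2 * t ^ θp * (ω ^ θp / ω ^ 2) * ω ^ 2 := by
                rw [h2]; field_simp
        rw [Real.norm_eq_abs, abs_mul, abs_of_nonneg
          (div_nonneg (one_sub_cos_nonneg _) (by positivity))]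
        calc (1 - Real.cos (t*ω))/ω^2 * |r ω - L|
            ≤ (2 * t^θp * ω^(θp - 2)) * (c * ω^γ₀) := by
              apply mul_le_mul hgle (hrate ω hω1 hω2) (abs_nonneg _) (by positivity)
          _ = 2*c*t^θp * (ω^(θp - 2) * ω^γ₀) := by ring
          _ = 2*c*t^θp * ω ^ (γ₀/2 - 1) := by
              rw [← Real.rpow_add hω1]
              congr 1
              rw [hθp]; ring
    have hpiece2 : (∫ ω in Ici ω₀, ‖(1 - Real.cos (t*ω))/ω^2 * (r ω - L)‖) ≤ C₂ := by
      rw [hC₂]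
      apply setIntegral_mono_on (IntegrableOn.mono_set IE.norm hsub2) hC₂int measurableSet_Ici
      intro ω hω
      have hω0 : 0 < ω := lt_of_lt_of_le hω₀ hω
      have hrw : ω^(-2:ℝ) = (ω^2)⁻¹ := by
        rw [show ((-2:ℝ)) = -((2:ℕ):ℝ) by norm_num, Real.rpow_neg hω0.le, Real.rpow_natCast]
      rw [Real.norm_eq_abs, abs_mul, abs_of_nonneg
        (div_nonneg (one_sub_cos_nonneg _) (by positivity))]
      have hgle : (1 - Real.cos (t*ω))/ω^2 ≤ 2 * (ω^2)⁻¹ := by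
        rw [div_le_iff₀ (by positivity)]
        calc 1 - Real.cos (t*ω) ≤ 2 := one_sub_cos_le_two _
          _ = 2 * (ω^2)⁻¹ * ω^2 := by rw [inv_mul_cancel_right₀ (by positivity)]
      calc (1 - Real.cos (t*ω))/ω^2 * |r ω - L| ≤ (2 * (ω^2)⁻¹) * C₀ := by
            apply mul_le_mul hgle (habs ω (hsub2 hω)) (abs_nonneg _) (by positivity)
        _ = 2*C₀*ω^(-2:ℝ) := by rw [hrw]; ring
    calc |E| ≤ _ := hnorm
      _ = _ := hunion
      _ ≤ 2*c*t^θp * K + C₂ := add_le_add hpiece1 hpiece2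
  -- step C : conclude
  have htpow : (0:ℝ) < t ^ (-(γ₀/2)) := Real.rpow_pos_of_pos ht _
  rw [Real.norm_eq_abs, Real.norm_eq_abs, abs_of_pos htpow]
  have h1 : |4 * E / t| = 4 * |E| / t := by
    rw [abs_div, abs_mul, abs_of_pos ht]
    norm_num
  rw [h1]
  have h2 : t^θp / t = t ^ (-(γ₀/2)) := by
    rw [show t^θp/t = t^θp/t^(1:ℝ) by rw [Real.rpow_one], ← Real.rpow_sub ht]
    congr 1
    rw [hθp]; ring
  have h3 : (1:ℝ)/t ≤ t ^ (-(γ₀/2)) := by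
    rw [show (1:ℝ)/t = t ^ (-1:ℝ) by rw [Real.rpow_neg_one]; ring]
    exact Real.rpow_le_rpow_of_exponent_le ht1 (by linarith)
  calc 4 * |E| / t ≤ 4 * (2*c*t^θp * K + C₂) / t := by
        gcongr 4 * ?_ / t
    _ = 8*c*K * (t^θp/t) + 4*C₂ * (1/t) := by field_simp; ring
    _ ≤ 8*c*K * t ^ (-(γ₀/2)) + 4*C₂ * t ^ (-(γ₀/2)) := by
        rw [h2]
        apply add_le_add le_rfl
        apply mul_le_mul_of_nonneg_left h3 (by positivity)
    _ = (8*c*K + 4*C₂) * t ^ (-(γ₀/2)) := by ring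
end

section
/- Suppose K : (0,∞) → ℝ is locally integrable, eventually decreasing, positive, K(t) → 0 at infinity, t·K(t) → C₁ > 0 as t → ∞, and K_cos(ω) > 0 for all ω > 0. Then the spectral density r̂(ω) = (1/(2π)) · 2β K_cos(ω) / ([β K_cos(ω)]² + [mω − β K_sin(ω)]²), with m, β > 0, is continuous on (0,∞), tends to 0 as ω → 0⁺ and as ω → ∞, and is integrable on (0,∞). -/
open MeasureTheory Filter Set Real

lemma layercake_bound (h f : ℝ → ℝ) (hh : Antitone h) (hf : Continuous f) (M : ℝ)
    (hM : ∀ x y : ℝ, |∫ t in x..y, f t| ≤ M) (a b : ℝ) (hab : a ≤ b) (hhb : h b = 0) :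
    |∫ t in a..b, h t * f t| ≤ M * h a := by
  have hha : 0 ≤ h a := hhb ▸ hh hab
  have hM0 : 0 ≤ M := le_trans (abs_nonneg _) (hM 0 0)
  set μ := volume.restrict (Ioo (0:ℝ) (h a)) with hμ
  set ν := volume.restrict (Ioc a b) with hν
  have hset : MeasurableSet {p : ℝ × ℝ | p.1 < h p.2} :=
    measurableSet_lt measurable_fst (hh.measurable.comp measurable_snd)
  obtain ⟨Cf, hCf⟩ := (isCompact_Icc (a := a) (b := b)).exists_bound_of_continuousOn
    hf.continuousOn
  set F : ℝ × ℝ → ℝ := fun p => if p.1 < h p.2 then f p.2 else 0 with hF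
  have hFmeas : AEStronglyMeasurable F (μ.prod ν) :=
    (Measurable.ite hset (hf.measurable.comp measurable_snd) measurable_const).aestronglyMeasurable
  haveI : IsFiniteMeasure μ := ⟨by rw [hμ, Measure.restrict_apply_univ]; exact measure_Ioo_lt_top⟩
  haveI : IsFiniteMeasure ν := ⟨by rw [hν, Measure.restrict_apply_univ]; exact measure_Ioc_lt_top⟩
  have hFint : Integrable F (μ.prod ν) := by
    refine (integrable_const (max Cf 0)).mono' hFmeas ?_
    rw [hμ, hν, Measure.prod_restrict]
    refine (ae_restrict_iff' (measurableSet_Ioo.prod measurableSet_Ioc)).2 (ae_of_all _ ?_)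
    rintro ⟨s, t⟩ ⟨_, ht⟩
    simp only [F]
    split
    · exact le_max_of_le_left (hCf t ⟨le_of_lt ht.1, ht.2⟩)
    · simp
  have inner_eq : ∀ t ∈ Ioc a b, (∫ s, F (s, t) ∂μ) = h t * f t := by
    intro t ht
    have h0t : 0 ≤ h t := hhb ▸ hh ht.2
    have hta : h t ≤ h a := hh ht.1.le
    have hfun : (fun s => F (s, t)) = (Iio (h t)).indicator (fun _ => f t) := by
      funext s; simp [F, Set.indicator_apply, Set.mem_Iio]
    rw [hfun, integral_indicator_const _ measurableSet_Iio, hμ,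
      measureReal_restrict_apply measurableSet_Iio]
    have : Iio (h t) ∩ Ioo 0 (h a) = Ioo 0 (h t) := by
      ext s; constructor
      · rintro ⟨h1, h2, _⟩; exact ⟨h2, h1⟩
      · rintro ⟨h1, h2⟩; exact ⟨h2, h1, lt_of_lt_of_le h2 hta⟩
    rw [this, measureReal_def, Real.volume_Ioo, sub_zero, ENNReal.toReal_ofReal h0t, smul_eq_mul]
  have eq1 : ∫ t in a..b, h t * f t = ∫ s, (∫ t, F (s, t) ∂ν) ∂μ := by
    rw [intervalIntegral.integral_of_le hab]
    have e2 : ∫ t in Ioc a b, h t * f t = ∫ t, (∫ s, F (s, t) ∂μ) ∂ν := by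
      refine setIntegral_congr_fun measurableSet_Ioc ?_
      intro t ht; exact (inner_eq t ht).symm
    rw [e2]
    exact (integral_integral_swap (f := fun s t => F (s, t)) hFint).symm
  have outer : ∀ s ∈ Ioo 0 (h a), ‖∫ t, F (s, t) ∂ν‖ ≤ M := by
    intro s hs
    have hsetE : MeasurableSet {t : ℝ | s < h t} :=
      measurableSet_lt measurable_const hh.measurable
    have e3 : (∫ t, F (s, t) ∂ν) = ∫ t in Ioc a b ∩ {t | s < h t}, f t := by
      have hfe : ∀ t, F (s, t) = ({u : ℝ | s < h u}).indicator f t := fun t => by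
        simp [F, Set.indicator_apply]
      calc (∫ t, F (s, t) ∂ν) = ∫ t in Ioc a b, ({u : ℝ | s < h u}).indicator f t := by
            rw [hν]; exact integral_congr_ae (ae_of_all _ hfe)
        _ = ∫ t in Ioc a b ∩ {u : ℝ | s < h u}, f t := setIntegral_indicator hsetE
    rw [e3]
    set E := Ioc a b ∩ {t | s < h t} with hE
    rcases E.eq_empty_or_nonempty with hEe | hne
    · rw [hEe, Measure.restrict_empty, integral_zero_measure]
      simpa using hM0
    · have hbdd : BddAbove E := ⟨b, fun t ht => ht.1.2⟩
      set c := sSup E with hc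
      have hcb : c ≤ b := csSup_le hne (fun t ht => ht.1.2)
      obtain ⟨t₀, ht₀⟩ := hne
      have hac : a < c := lt_of_lt_of_le ht₀.1.1 (le_csSup hbdd ht₀)
      have hEsub : E ⊆ Ioc a c := fun t ht => ⟨ht.1.1, le_csSup hbdd ht⟩
      have hIooE : Ioo a c ⊆ E := by
        intro t ht
        obtain ⟨t', ht', htt'⟩ := exists_lt_of_lt_csSup ⟨t₀, ht₀⟩ ht.2
        exact ⟨⟨ht.1, le_trans ht.2.le hcb⟩, lt_of_lt_of_le ht'.2 (hh htt'.le)⟩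
      have hEae : E =ᵐ[volume] Ioc a c := by
        refine ae_eq_set.2 ⟨?_, ?_⟩
        · rw [diff_eq_empty.2 hEsub]; simp
        · refine measure_mono_null (fun t ht => ?_) (Real.volume_singleton (a := c))
          rcases lt_or_eq_of_le ht.1.2 with hlt | heq
          · exact absurd (hIooE ⟨ht.1.1, hlt⟩) ht.2
          · exact heq
      rw [setIntegral_congr_set hEae, ← intervalIntegral.integral_of_le hac.le]
      exact (hM a c).trans_eq' (Real.norm_eq_abs _)
  have hGmeas : AEStronglyMeasurable (fun s => ∫ t, F (s, t) ∂ν) μ :=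
    (hFint.integral_prod_left).aestronglyMeasurable
  calc |∫ t in a..b, h t * f t| = ‖∫ s in Ioo (0:ℝ) (h a), (∫ t, F (s, t) ∂ν)‖ := by
        rw [eq1]; rfl
    _ ≤ M * (volume (Ioo (0:ℝ) (h a))).toReal :=
        norm_setIntegral_le_of_norm_le_const measure_Ioo_lt_top outer
    _ = M * h a := by rw [Real.volume_Ioo, sub_zero, ENNReal.toReal_ofReal hha]

lemma antitone_osc_bound (g f : ℝ → ℝ) (hg : Antitone g) (hf : Continuous f) (M : ℝ)
    (hM : ∀ x y : ℝ, |∫ t in x..y, f t| ≤ M) (a b : ℝ) (hab : a ≤ b) (hgb : 0 ≤ g b) :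
    |∫ t in a..b, g t * f t| ≤ M * g a := by
  have hM0 : 0 ≤ M := le_trans (abs_nonneg _) (hM 0 0)
  have hgab : g b ≤ g a := hg hab
  have hh : Antitone (fun t => g t - g b) := fun x y hxy => sub_le_sub_right (hg hxy) (g b)
  have h1 : |∫ t in a..b, (g t - g b) * f t| ≤ M * (g a - g b) :=
    layercake_bound (fun t => g t - g b) f hh hf M hM a b hab (by simp)
  have hgint : IntervalIntegrable g volume a b := (hg.antitoneOn _).intervalIntegrable
  have hgf : IntervalIntegrable (fun t => g t * f t) volume a b :=
    hgint.mul_continuousOn hf.continuousOn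
  have hcf : IntervalIntegrable (fun t => g b * f t) volume a b :=
    (hf.intervalIntegrable a b).const_mul _
  have hsplit : ∫ t in a..b, (g t - g b) * f t
      = (∫ t in a..b, g t * f t) - g b * ∫ t in a..b, f t := by
    have he : (fun t => (g t - g b) * f t) = fun t => g t * f t - g b * f t := by
      funext t; ring
    rw [he, intervalIntegral.integral_sub hgf hcf, intervalIntegral.integral_const_mul]
  have h2 : |g b * ∫ t in a..b, f t| ≤ g b * M := by
    rw [abs_mul, abs_of_nonneg hgb]
    exact mul_le_mul_of_nonneg_left (hM a b) hgb
  calc |∫ t in a..b, g t * f t|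
      = |(∫ t in a..b, (g t - g b) * f t) + g b * ∫ t in a..b, f t| := by rw [hsplit, sub_add_cancel]
    _ ≤ |∫ t in a..b, (g t - g b) * f t| + |g b * ∫ t in a..b, f t| := abs_add_le _ _
    _ ≤ M * (g a - g b) + g b * M := add_le_add h1 h2
    _ = M * g a := by ring

lemma osc_cos (ω : ℝ) (hω : 0 < ω) (x y : ℝ) : |∫ t in x..y, Real.cos (ω * t)| ≤ 2 / ω := by
  rw [intervalIntegral.integral_comp_mul_left (fun u => Real.cos u) hω.ne', integral_cos,
    smul_eq_mul, abs_mul, abs_inv, abs_of_pos hω]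
  have : |Real.sin (ω * y) - Real.sin (ω * x)| ≤ 2 := by
    calc |Real.sin (ω * y) - Real.sin (ω * x)| ≤ |Real.sin (ω * y)| + |Real.sin (ω * x)| :=
          abs_sub _ _
      _ ≤ 1 + 1 := add_le_add (Real.abs_sin_le_one _) (Real.abs_sin_le_one _)
      _ = 2 := by norm_num
  calc ω⁻¹ * |Real.sin (ω * y) - Real.sin (ω * x)| ≤ ω⁻¹ * 2 :=
        mul_le_mul_of_nonneg_left this (inv_nonneg.2 hω.le)
    _ = 2 / ω := by rw [div_eq_mul_inv, mul_comm]

lemma osc_sin (ω : ℝ) (hω : 0 < ω) (x y : ℝ) : |∫ t in x..y, Real.sin (ω * t)| ≤ 2 / ω := by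
  rw [intervalIntegral.integral_comp_mul_left (fun u => Real.sin u) hω.ne', integral_sin,
    smul_eq_mul, abs_mul, abs_inv, abs_of_pos hω]
  have : |Real.cos (ω * x) - Real.cos (ω * y)| ≤ 2 := by
    calc |Real.cos (ω * x) - Real.cos (ω * y)| ≤ |Real.cos (ω * x)| + |Real.cos (ω * y)| :=
          abs_sub _ _
      _ ≤ 1 + 1 := add_le_add (Real.abs_cos_le_one _) (Real.abs_cos_le_one _)
      _ = 2 := by norm_num
  calc ω⁻¹ * |Real.cos (ω * x) - Real.cos (ω * y)| ≤ ω⁻¹ * 2 :=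
        mul_le_mul_of_nonneg_left this (inv_nonneg.2 hω.le)
    _ = 2 / ω := by rw [div_eq_mul_inv, mul_comm]

lemma antitoneOn_tail_bound (K : ℝ → ℝ) (A : ℝ) (hdec : AntitoneOn K (Ici A))
    (hKnn : ∀ t, A ≤ t → 0 ≤ K t)
    (f : ℝ → ℝ) (hf : Continuous f) (M : ℝ) (hM : ∀ x y : ℝ, |∫ t in x..y, f t| ≤ M)
    (a b : ℝ) (hAa : A ≤ a) (hab : a ≤ b) :
    |∫ t in a..b, K t * f t| ≤ M * K a := by
  set g : ℝ → ℝ := fun t => K (max a (min t b)) with hgdef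
  have hmem : ∀ t, max a (min t b) ∈ Ici A := fun t => le_trans hAa (le_max_left _ _)
  have hg : Antitone g := by
    intro x y hxy
    have hmono : max a (min x b) ≤ max a (min y b) :=
      max_le_max le_rfl (min_le_min hxy le_rfl)
    exact hdec (hmem x) (hmem y) hmono
  have hgb : 0 ≤ g b := by
    have : max a (min b b) = b := by rw [min_self, max_eq_right hab]
    rw [hgdef]; simp only [this]
    exact hKnn b (le_trans hAa hab)
  have hga : g a = K a := by
    have : max a (min a b) = a := by rw [min_eq_left hab, max_self]
    simp [hgdef, this]
  have heq : ∫ t in a..b, K t * f t = ∫ t in a..b, g t * f t := by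
    refine intervalIntegral.integral_congr ?_
    intro t ht
    rw [uIcc_of_le hab] at ht
    have : max a (min t b) = t := by rw [min_eq_left ht.2, max_eq_right ht.1]
    simp [hgdef, this]
  rw [heq, ← hga]
  exact antitone_osc_bound g f hg hf M hM a b hab hgb

lemma transform_props (K : ℝ → ℝ) (A : ℝ) (hA0 : 0 < A)
    (hints : ∀ T : ℝ, 0 < T → IntegrableOn K (Ioc 0 T))
    (hpos : ∀ t ∈ Ioi (0:ℝ), 0 < K t)
    (hdec : AntitoneOn K (Ici A))
    (hK0 : Tendsto K atTop (nhds 0))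
    (trig : ℝ → ℝ) (htrigc : Continuous trig) (htrig1 : ∀ x, |trig x| ≤ 1)
    (Kf : ℝ → ℝ)
    (hKf : ∀ ω > (0:ℝ), Tendsto (fun T => ∫ t in (0:ℝ)..T, K t * trig (ω * t)) atTop
      (nhds (Kf ω)))
    (hosc : ∀ ω : ℝ, 0 < ω → ∀ x y : ℝ, |∫ t in x..y, trig (ω * t)| ≤ 2 / ω) :
    (∀ ω : ℝ, 0 < ω → ∀ T, A ≤ T →
      |Kf ω - ∫ t in (0:ℝ)..T, K t * trig (ω * t)| ≤ 2 / ω * K T)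
    ∧ (∀ ω : ℝ, 0 < ω → |Kf ω| ≤ (∫ t in Ioc (0:ℝ) A, K t) + 2 / ω * K A)
    ∧ ContinuousOn Kf (Ioi 0) := by
  have hKnn : ∀ t, A ≤ t → 0 ≤ K t := fun t ht => (hpos t (lt_of_lt_of_le hA0 ht)).le
  have hInt : ∀ (ω b : ℝ), 0 < b → IntegrableOn (fun t => K t * trig (ω * t)) (Ioc 0 b) := by
    intro ω b hb
    have hm : AEStronglyMeasurable (fun t => trig (ω * t))
        (volume.restrict (Ioc (0:ℝ) b)) :=
      (htrigc.comp (continuous_const.mul continuous_id)).aestronglyMeasurable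
    have := (hints b hb).bdd_mul hm (ae_of_all _ (fun t => (Real.norm_eq_abs _).trans_le (htrig1 (ω * t))))
    exact this.congr (ae_of_all _ (fun t => mul_comm _ _))
  have hiK : ∀ (ω T : ℝ), 0 < T →
      IntervalIntegrable (fun t => K t * trig (ω * t)) volume 0 T := by
    intro ω T hT
    rw [intervalIntegrable_iff_integrableOn_Ioc_of_le hT.le]
    exact hInt ω T hT
  have hiK' : ∀ (ω a b : ℝ), 0 < a → a ≤ b →
      IntervalIntegrable (fun t => K t * trig (ω * t)) volume a b := by
    intro ω a b ha hab
    rw [intervalIntegrable_iff_integrableOn_Ioc_of_le hab]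
    exact (hInt ω b (lt_of_lt_of_le ha hab)).mono_set (Ioc_subset_Ioc ha.le le_rfl)
  have tail : ∀ ω : ℝ, 0 < ω → ∀ T, A ≤ T →
      |Kf ω - ∫ t in (0:ℝ)..T, K t * trig (ω * t)| ≤ 2 / ω * K T := by
    intro ω hω T hT
    have hT0 : 0 < T := lt_of_lt_of_le hA0 hT
    have hlim := ((hKf ω hω).sub_const (∫ t in (0:ℝ)..T, K t * trig (ω * t))).abs
    refine le_of_tendsto hlim ?_
    filter_upwards [eventually_ge_atTop T] with T' hT'
    have hadd : (∫ t in (0:ℝ)..T', K t * trig (ω * t))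
        = (∫ t in (0:ℝ)..T, K t * trig (ω * t)) + ∫ t in T..T', K t * trig (ω * t) :=
      (intervalIntegral.integral_add_adjacent_intervals (hiK ω T hT0) (hiK' ω T T' hT0 hT')).symm
    rw [hadd, add_sub_cancel_left]
    exact antitoneOn_tail_bound K A hdec hKnn (fun t => trig (ω * t))
      (htrigc.comp (continuous_const.mul continuous_id)) (2 / ω) (hosc ω hω) T T' hT hT'
  refine ⟨tail, ?_, ?_⟩
  · intro ω hω
    have h1 := tail ω hω A le_rfl
    have h2 : |∫ t in (0:ℝ)..A, K t * trig (ω * t)| ≤ ∫ t in Ioc (0:ℝ) A, K t := by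
      rw [intervalIntegral.integral_of_le hA0.le, ← Real.norm_eq_abs]
      refine le_trans (norm_integral_le_integral_norm _) ?_
      refine setIntegral_mono_on ((hInt ω A hA0).norm) (hints A hA0) measurableSet_Ioc ?_
      intro t ht
      rw [Real.norm_eq_abs, abs_mul]
      have hKt : 0 < K t := hpos t ht.1
      calc |K t| * |trig (ω * t)| ≤ |K t| * 1 :=
            mul_le_mul_of_nonneg_left (htrig1 _) (abs_nonneg _)
        _ = K t := by rw [mul_one, abs_of_pos hKt]
    calc |Kf ω| = |(Kf ω - ∫ t in (0:ℝ)..A, K t * trig (ω * t))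
          + ∫ t in (0:ℝ)..A, K t * trig (ω * t)| := by rw [sub_add_cancel]
      _ ≤ |Kf ω - ∫ t in (0:ℝ)..A, K t * trig (ω * t)|
          + |∫ t in (0:ℝ)..A, K t * trig (ω * t)| := abs_add_le _ _
      _ ≤ 2 / ω * K A + (∫ t in Ioc (0:ℝ) A, K t) := add_le_add h1 h2
      _ = (∫ t in Ioc (0:ℝ) A, K t) + 2 / ω * K A := add_comm _ _
  intro ω₀ hω₀
  have hω₀' : (0:ℝ) < ω₀ := hω₀
  have hc : 0 < ω₀ / 2 := half_pos hω₀'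
  have hcont_on : ContinuousOn Kf (Ioi (ω₀ / 2)) := by
    set Fp : ℝ → ℝ → ℝ := fun T ω => ∫ t in (0:ℝ)..T, K t * trig (ω * t) with hFp
    have huni : TendstoUniformlyOn Fp Kf atTop (Ioi (ω₀ / 2)) := by
      rw [Metric.tendstoUniformlyOn_iff]
      intro ε hε
      have h1 : Tendsto (fun T => 2 / (ω₀ / 2) * K T) atTop (nhds 0) := by
        simpa using hK0.const_mul (2 / (ω₀ / 2))
      have h2 : ∀ᶠ T in atTop, |2 / (ω₀ / 2) * K T| < ε := by
        have := (Metric.tendsto_nhds.1 h1 ε hε)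
        refine this.mono (fun T hT => ?_)
        rwa [Real.dist_eq, sub_zero] at hT
      filter_upwards [h2, eventually_ge_atTop A] with T h2T hTA
      intro ω hω
      have hω0 : 0 < ω := lt_trans hc hω
      have hKT : 0 ≤ K T := hKnn T hTA
      have hb1 : |Kf ω - Fp T ω| ≤ 2 / ω * K T := tail ω hω0 T hTA
      have hb2 : 2 / ω * K T ≤ 2 / (ω₀ / 2) * K T := by
        refine mul_le_mul_of_nonneg_right ?_ hKT
        exact div_le_div_of_nonneg_left (by norm_num) hc hω.le
      rw [Real.dist_eq]
      calc |Kf ω - Fp T ω| ≤ 2 / (ω₀ / 2) * K T := hb1.trans hb2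
        _ ≤ |2 / (ω₀ / 2) * K T| := le_abs_self _
        _ < ε := h2T
    refine huni.continuousOn (Eventually.frequently ?_)
    filter_upwards [eventually_ge_atTop (max A 1)] with T hT
    have hT0 : 0 < T := lt_of_lt_of_le (lt_of_lt_of_le zero_lt_one (le_max_right A 1)) hT
    have hcontT : Continuous (fun ω => Fp T ω) := by
      have heq : (fun ω => Fp T ω)
          = fun ω => ∫ t in Ioc (0:ℝ) T, K t * trig (ω * t) := by
        funext ω; exact intervalIntegral.integral_of_le hT0.le
      rw [heq]
      refine continuous_iff_continuousAt.2 (fun ω => ?_)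
      refine continuousAt_of_dominated ?_ ?_ ((hints T hT0).abs) ?_
      · exact Filter.Eventually.of_forall (fun ω' => (hInt ω' T hT0).aestronglyMeasurable)
      · refine Filter.Eventually.of_forall (fun ω' => ae_of_all _ (fun t => ?_))
        rw [Real.norm_eq_abs, abs_mul]
        calc |K t| * |trig (ω' * t)| ≤ |K t| * 1 :=
              mul_le_mul_of_nonneg_left (htrig1 _) (abs_nonneg _)
          _ = |K t| := mul_one _
      · refine ae_of_all _ (fun t => ?_)
        exact (continuous_const.mul (htrigc.comp ((continuous_id.mul continuous_const)))).continuousAt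
    exact hcontT.continuousOn
  exact (hcont_on.continuousAt (Ioi_mem_nhds (by linarith))).continuousWithinAt

set_option maxHeartbeats 1000000 in
theorem stmt_17 (K : ℝ → ℝ) (C₁ m β : ℝ) (hC₁ : 0 < C₁) (hm : 0 < m) (hβ : 0 < β)
    (hloc : LocallyIntegrableOn K (Ioi 0))
    (hint0 : IntegrableOn K (Ioc 0 1))
    (hpos : ∀ t ∈ Ioi (0:ℝ), 0 < K t)
    (hK0 : Tendsto K atTop (nhds 0))
    (hdec : ∃ A > (0:ℝ), AntitoneOn K (Ici A))
    (htK : Tendsto (fun t => t * K t) atTop (nhds C₁))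
    (Kcos Ksin : ℝ → ℝ)
    (hKcos : ∀ ω > (0:ℝ),
      Tendsto (fun T => ∫ t in (0:ℝ)..T, K t * Real.cos (ω * t)) atTop (nhds (Kcos ω)))
    (hKsin : ∀ ω > (0:ℝ),
      Tendsto (fun T => ∫ t in (0:ℝ)..T, K t * Real.sin (ω * t)) atTop (nhds (Ksin ω)))
    (hKcospos : ∀ ω > (0:ℝ), 0 < Kcos ω)
    (r : ℝ → ℝ)
    (hr : ∀ ω : ℝ, r ω = (1 / (2 * π)) * (2 * β * Kcos ω) /
        ((β * Kcos ω) ^ 2 + (m * ω - β * Ksin ω) ^ 2)) :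
    ContinuousOn r (Ioi 0) ∧
    Tendsto r (nhdsWithin 0 (Ioi 0)) (nhds 0) ∧
    Tendsto r atTop (nhds 0) ∧
    IntegrableOn r (Ioi 0) := by
  obtain ⟨A₀, hA₀pos, hA₀dec⟩ := hdec
  have hints : ∀ T : ℝ, 0 < T → IntegrableOn K (Ioc 0 T) := by
    intro T hT
    rcases le_or_gt T 1 with h1 | h1
    · exact hint0.mono_set (Ioc_subset_Ioc le_rfl h1)
    · have h2 : IntegrableOn K (Icc 1 T) :=
        hloc.integrableOn_compact_subset
          (fun x hx => lt_of_lt_of_le zero_lt_one hx.1) isCompact_Icc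
      have hsub : Ioc (0:ℝ) T ⊆ Ioc 0 1 ∪ Icc 1 T := by
        intro x hx
        rcases le_or_gt x 1 with h | h
        · exact Or.inl ⟨hx.1, h⟩
        · exact Or.inr ⟨h.le, hx.2⟩
      exact (hint0.union h2).mono_set hsub
  have hev : ∀ᶠ t in atTop, t * K t ∈ Icc (C₁/2) (2*C₁) :=
    htK (Icc_mem_nhds (by linarith) (by linarith))
  obtain ⟨A', hA'⟩ := eventually_atTop.1 hev
  set A₁ : ℝ := max A' (max A₀ 1) with hA₁def
  have hA₁A₀ : A₀ ≤ A₁ := le_trans (le_max_left _ _) (le_max_right _ _)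
  have hA₁1 : (1:ℝ) ≤ A₁ := le_trans (le_max_right _ _) (le_max_right _ _)
  have hA₁pos : 0 < A₁ := lt_of_lt_of_le zero_lt_one hA₁1
  have hA₁dec : AntitoneOn K (Ici A₁) := hA₀dec.mono (Ici_subset_Ici.2 hA₁A₀)
  have hbounds : ∀ t, A₁ ≤ t → C₁/2 ≤ t * K t ∧ t * K t ≤ 2*C₁ := by
    intro t ht
    exact hA' t (le_trans (le_max_left _ _) ht)
  obtain ⟨tailcos, bddcos, contcos⟩ := transform_props K A₁ hA₁pos hints hpos hA₁dec hK0
    Real.cos Real.continuous_cos (fun x => Real.abs_cos_le_one x) Kcos hKcos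
    (fun ω hω x y => osc_cos ω hω x y)
  obtain ⟨tailsin, bddsin, contsin⟩ := transform_props K A₁ hA₁pos hints hpos hA₁dec hK0
    Real.sin Real.continuous_sin (fun x => Real.abs_sin_le_one x) Ksin hKsin
    (fun ω hω x y => osc_sin ω hω x y)
  set IA : ℝ := ∫ t in Ioc (0:ℝ) A₁, K t with hIAdef
  have hIA0 : 0 ≤ IA := setIntegral_nonneg measurableSet_Ioc (fun t ht => (hpos t ht.1).le)
  have hKA0 : 0 ≤ K A₁ := (hpos A₁ hA₁pos).le
  set B : ℝ := IA + 2 * K A₁ with hBdef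
  have hB0 : 0 ≤ B := by positivity
  have habsB : ∀ (Kf : ℝ → ℝ),
      (∀ ω : ℝ, 0 < ω → |Kf ω| ≤ IA + 2 / ω * K A₁) → ∀ ω, 1 ≤ ω → |Kf ω| ≤ B := by
    intro Kf hKf ω hω
    have hω0 : (0:ℝ) < ω := lt_of_lt_of_le zero_lt_one hω
    refine (hKf ω hω0).trans ?_
    have h1 : 2 / ω ≤ 2 := by
      rw [div_le_iff₀ hω0]; nlinarith
    have h2 := mul_le_mul_of_nonneg_right h1 hKA0
    rw [hBdef]; linarith
  have hKcB : ∀ ω, 1 ≤ ω → |Kcos ω| ≤ B := habsB Kcos bddcos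
  have hKsB : ∀ ω, 1 ≤ ω → |Ksin ω| ≤ B := habsB Ksin bddsin
  -- continuity of r
  have hden : ∀ ω, 0 < ω → 0 < (β * Kcos ω)^2 + (m * ω - β * Ksin ω)^2 := by
    intro ω hω
    have h1 : 0 < β * Kcos ω := mul_pos hβ (hKcospos ω hω)
    nlinarith [sq_nonneg (m*ω - β*Ksin ω)]
  have hrcont : ContinuousOn r (Ioi 0) := by
    have hc : ContinuousOn (fun ω => (1 / (2 * π)) * (2 * β * Kcos ω) /
        ((β * Kcos ω) ^ 2 + (m * ω - β * Ksin ω) ^ 2)) (Ioi 0) := by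
      refine ContinuousOn.div (continuousOn_const.mul (continuousOn_const.mul contcos)) ?_ ?_
      · refine ContinuousOn.add ((continuousOn_const.mul contcos).pow 2) ?_
        exact (((continuous_const.mul continuous_id).continuousOn).sub
          (continuousOn_const.mul contsin)).pow 2
      · intro ω hω; exact (hden ω hω).ne'
    exact hc.congr (fun ω _ => hr ω)
  have hr0 : ∀ ω, 0 < ω → 0 ≤ r ω := by
    intro ω hω
    rw [hr ω]
    have h1 : 0 < β * Kcos ω := mul_pos hβ (hKcospos ω hω)
    have h2 := hden ω hω
    have h3 : 0 ≤ (1 / (2 * π)) * (2 * β * Kcos ω) := by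
      have hπ := Real.pi_pos
      exact mul_nonneg (by positivity) (mul_nonneg (by positivity) (hKcospos ω hω).le)
    exact div_nonneg h3 h2.le
  -- behaviour at infinity
  set D : ℝ := max 1 (2*β*B/m) with hDdef
  have hD1 : (1:ℝ) ≤ D := le_max_left _ _
  have hD0 : 0 < D := lt_of_lt_of_le zero_lt_one hD1
  have hrbound : ∀ ω, D ≤ ω → r ω ≤ (1 / (2 * π)) * (2 * β * B) / ((m * ω / 2)^2) := by
    intro ω hω
    have hω1 : 1 ≤ ω := hD1.trans hω
    have hω0 : 0 < ω := lt_of_lt_of_le zero_lt_one hω1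
    have hKc := hKcB ω hω1
    have hKs := hKsB ω hω1
    have hnum : (1 / (2 * π)) * (2 * β * Kcos ω) ≤ (1 / (2 * π)) * (2 * β * B) := by
      have h1 : Kcos ω ≤ B := (le_abs_self _).trans hKc
      have h2 : (0:ℝ) < 1 / (2*π) := by have := Real.pi_pos; positivity
      have h3 : 2 * β * Kcos ω ≤ 2 * β * B :=
        mul_le_mul_of_nonneg_left h1 (by positivity)
      exact mul_le_mul_of_nonneg_left h3 h2.le
    have hden2 : (m * ω / 2)^2 ≤ (β * Kcos ω)^2 + (m * ω - β * Ksin ω)^2 := by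
      have h1 : β * Ksin ω ≤ β * B := mul_le_mul_of_nonneg_left ((le_abs_self _).trans hKs) hβ.le
      have h2 : 2*β*B/m ≤ ω := (le_max_right _ _).trans hω
      have h3 : 2*β*B ≤ m*ω := by
        rw [div_le_iff₀ hm] at h2; nlinarith
      have h4 : m * ω / 2 ≤ m * ω - β * Ksin ω := by linarith
      have h5 : 0 ≤ m * ω / 2 := by positivity
      nlinarith [sq_nonneg (β * Kcos ω)]
    rw [hr ω]
    have hnn : 0 ≤ (1 / (2 * π)) * (2 * β * B) := by have := Real.pi_pos; positivity
    exact div_le_div₀ hnn hnum (by positivity) hden2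
  have hgT : Tendsto (fun ω => (1 / (2 * π)) * (2 * β * B) / ((m * ω / 2)^2)) atTop (nhds 0) := by
    refine Tendsto.div_atTop tendsto_const_nhds ?_
    have h1 : Tendsto (fun ω : ℝ => m * ω / 2) atTop atTop :=
      (tendsto_id.const_mul_atTop hm).atTop_div_const (by norm_num)
    have h2 := h1.atTop_mul_atTop₀ h1
    refine h2.congr (fun ω => ?_)
    rw [← pow_two]
  have hratTop : Tendsto r atTop (nhds 0) := by
    refine tendsto_of_tendsto_of_tendsto_of_le_of_le' tendsto_const_nhds hgT ?_ ?_
    · filter_upwards [eventually_ge_atTop D] with ω hω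
      exact hr0 ω (lt_of_lt_of_le hD0 hω)
    · filter_upwards [eventually_ge_atTop D] with ω hω
      exact hrbound ω hω
  -- integrability of K·cos on (0,b]
  have hIcos : ∀ (ω b : ℝ), 0 < b → IntegrableOn (fun t => K t * Real.cos (ω * t)) (Ioc 0 b) := by
    intro ω b hb
    have hm' : AEStronglyMeasurable (fun t => Real.cos (ω * t))
        (volume.restrict (Ioc (0:ℝ) b)) :=
      (Real.continuous_cos.comp (continuous_const.mul continuous_id)).aestronglyMeasurable
    have hbd : ∃ C, ∀ t : ℝ, ‖Real.cos (ω * t)‖ ≤ C :=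
      ⟨1, fun t => by rw [Real.norm_eq_abs]; exact Real.abs_cos_le_one _⟩
    exact ((hints b hb).bdd_mul hm' (ae_of_all _ hbd.choose_spec)).congr (ae_of_all _ (fun t => mul_comm _ _))
  -- Kcos tends to infinity at 0+
  have hKcosTop : Tendsto Kcos (nhdsWithin 0 (Ioi 0)) atTop := by
    set δ₀ : ℝ := π / (3 * A₁) with hδ₀def
    have hπ := Real.pi_pos
    have hδ₀ : 0 < δ₀ := by positivity
    have hlow : ∀ ω ∈ Ioo (0:ℝ) δ₀,
        C₁/4 * (Real.log (π / (3 * ω)) - Real.log A₁) - 12 * C₁ / π ≤ Kcos ω := by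
      rintro ω ⟨hω0, hωδ⟩
      set S : ℝ := π / (3 * ω) with hSdef
      have hS0 : 0 < S := by positivity
      have hωS : ω * S = π / 3 := by
        rw [hSdef]; field_simp
      have hA₁S : A₁ < S := by
        rw [hSdef, lt_div_iff₀ (by positivity)]
        rw [hδ₀def, lt_div_iff₀ (by positivity)] at hωδ
        nlinarith
      have htail := tailcos ω hω0 S hA₁S.le
      have hKS : K S ≤ 2 * C₁ / S := by
        have h1 := (hbounds S hA₁S.le).2
        rw [le_div_iff₀ hS0]; nlinarith
      have hKS0 : 0 ≤ K S := (hpos S hS0).le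
      have htail2 : 2 / ω * K S ≤ 12 * C₁ / π := by
        have h1 : 2 / ω * K S ≤ 2 / ω * (2 * C₁ / S) :=
          mul_le_mul_of_nonneg_left hKS (by positivity)
        have h2 : 2 / ω * (2 * C₁ / S) = 12 * C₁ / π := by
          rw [hSdef]; field_simp; ring
        linarith
      have hsplit : (∫ t in (0:ℝ)..S, K t * Real.cos (ω * t))
          = (∫ t in (0:ℝ)..A₁, K t * Real.cos (ω * t))
            + ∫ t in A₁..S, K t * Real.cos (ω * t) := by
        refine (intervalIntegral.integral_add_adjacent_intervals ?_ ?_).symm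
        · rw [intervalIntegrable_iff_integrableOn_Ioc_of_le hA₁pos.le]
          exact hIcos ω A₁ hA₁pos
        · rw [intervalIntegrable_iff_integrableOn_Ioc_of_le hA₁S.le]
          exact (hIcos ω S hS0).mono_set (Ioc_subset_Ioc hA₁pos.le le_rfl)
      have hpart1 : 0 ≤ ∫ t in (0:ℝ)..A₁, K t * Real.cos (ω * t) := by
        rw [intervalIntegral.integral_of_le hA₁pos.le]
        refine setIntegral_nonneg measurableSet_Ioc (fun t ht => ?_)
        have ht0 : 0 < t := ht.1
        have hcos : 0 ≤ Real.cos (ω * t) := by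
          refine Real.cos_nonneg_of_mem_Icc ⟨by nlinarith, ?_⟩
          have h1 : ω * t ≤ ω * A₁ := mul_le_mul_of_nonneg_left ht.2 hω0.le
          have h2 : ω * A₁ ≤ ω * S := mul_le_mul_of_nonneg_left hA₁S.le hω0.le
          nlinarith [hωS]
        exact mul_nonneg (hpos t ht0).le hcos
      have hpart2 : C₁/4 * (Real.log S - Real.log A₁)
          ≤ ∫ t in A₁..S, K t * Real.cos (ω * t) := by
        have h0uIcc : (0:ℝ) ∉ uIcc A₁ S := by
          rw [uIcc_of_le hA₁S.le]
          rintro ⟨h1, -⟩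
          exact absurd h1 (not_le.2 hA₁pos)
        have hlowint : (∫ t in A₁..S, C₁/4 * (1/t)) = C₁/4 * (Real.log S - Real.log A₁) := by
          rw [intervalIntegral.integral_const_mul, integral_one_div h0uIcc,
            Real.log_div hS0.ne' hA₁pos.ne']
        rw [← hlowint]
        refine intervalIntegral.integral_mono_on hA₁S.le ?_ ?_ ?_
        · refine ContinuousOn.intervalIntegrable ?_
          rw [uIcc_of_le hA₁S.le]
          refine continuousOn_const.mul (continuousOn_const.div continuousOn_id ?_)
          intro t ht
          exact (lt_of_lt_of_le hA₁pos ht.1).ne'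
        · rw [intervalIntegrable_iff_integrableOn_Ioc_of_le hA₁S.le]
          exact (hIcos ω S hS0).mono_set (Ioc_subset_Ioc hA₁pos.le le_rfl)
        · intro t ht
          have ht0 : 0 < t := lt_of_lt_of_le hA₁pos ht.1
          have hKt : C₁ / (2*t) ≤ K t := by
            have h1 := (hbounds t ht.1).1
            rw [div_le_iff₀ (by positivity)]; nlinarith
          have hcos : 1/2 ≤ Real.cos (ω * t) := by
            have h1 : ω * t ≤ π / 3 := by
              have := mul_le_mul_of_nonneg_left ht.2 hω0.le
              nlinarith
            have h2 := Real.cos_le_cos_of_nonneg_of_le_pi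
              (by positivity : (0:ℝ) ≤ ω*t) (by nlinarith) h1
            rw [Real.cos_pi_div_three] at h2
            exact h2
          have hKt0 : 0 ≤ K t := (hpos t ht0).le
          calc C₁/4 * (1/t) = (C₁/(2*t)) * (1/2) := by ring
            _ ≤ K t * Real.cos (ω * t) := mul_le_mul hKt hcos (by norm_num) hKt0
      have habs := (abs_le.1 htail).1
      have hfin : (∫ t in (0:ℝ)..S, K t * Real.cos (ω*t)) - 2/ω * K S ≤ Kcos ω := by
        linarith
      rw [hsplit] at hfin
      linarith
    have hφT : Tendsto (fun ω => C₁/4 * (Real.log (π / (3 * ω)) - Real.log A₁) - 12 * C₁ / π)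
        (nhdsWithin 0 (Ioi 0)) atTop := by
      have hneg : Tendsto (fun ω : ℝ => -Real.log ω) (nhdsWithin 0 (Ioi 0)) atTop :=
        tendsto_neg_atBot_atTop.comp Real.tendsto_log_nhdsGT_zero
      have h1 : Tendsto (fun ω : ℝ => Real.log (π/3) + -Real.log ω)
          (nhdsWithin 0 (Ioi 0)) atTop := tendsto_atTop_add_const_left _ _ hneg
      have h2 : Tendsto (fun ω : ℝ => C₁/4 * (Real.log (π/3) + -Real.log ω - Real.log A₁)
          - 12 * C₁ / π) (nhdsWithin 0 (Ioi 0)) atTop := by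
        refine tendsto_atTop_add_const_right _ _ ?_
        refine Tendsto.const_mul_atTop (by positivity) ?_
        exact tendsto_atTop_add_const_right _ _ h1
      refine h2.congr' ?_
      filter_upwards [self_mem_nhdsWithin] with ω hω
      have hω0 : (0:ℝ) < ω := hω
      have : π / (3 * ω) = (π/3) / ω := by ring
      rw [this, Real.log_div (by positivity : (π/3 : ℝ) ≠ 0) hω0.ne']
      ring
    refine tendsto_atTop_mono' _ ?_ hφT
    filter_upwards [Ioo_mem_nhdsGT_of_mem (⟨le_rfl, hδ₀⟩ : (0:ℝ) ∈ Ico 0 δ₀)] with ω hω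
    exact hlow ω hω
  -- limit of r at 0+
  have hr0' : Tendsto r (nhdsWithin 0 (Ioi 0)) (nhds 0) := by
    have hub : ∀ᶠ ω in nhdsWithin 0 (Ioi 0), r ω ≤ 1 / (π * β * Kcos ω) := by
      filter_upwards [self_mem_nhdsWithin] with ω hω
      have hω0 : (0:ℝ) < ω := hω
      have hKc := hKcospos ω hω0
      have hπ := Real.pi_pos
      rw [hr ω]
      have hnum : 0 < (1 / (2 * π)) * (2 * β * Kcos ω) := by positivity
      have h1 : (1 / (2 * π)) * (2 * β * Kcos ω) / ((β * Kcos ω)^2 + (m*ω - β*Ksin ω)^2)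
          ≤ (1 / (2 * π)) * (2 * β * Kcos ω) / ((β * Kcos ω)^2) := by
        refine div_le_div_of_nonneg_left hnum.le (by positivity) ?_
        nlinarith [sq_nonneg (m*ω - β*Ksin ω)]
      have h2 : (1 / (2 * π)) * (2 * β * Kcos ω) / ((β * Kcos ω)^2)
          = 1 / (π * β * Kcos ω) := by
        field_simp
      linarith
    have hlb : ∀ᶠ ω in nhdsWithin 0 (Ioi 0), 0 ≤ r ω := by
      filter_upwards [self_mem_nhdsWithin] with ω hω
      exact hr0 ω hω
    have hubT : Tendsto (fun ω => 1 / (π * β * Kcos ω)) (nhdsWithin 0 (Ioi 0)) (nhds 0) := by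
      have hπ := Real.pi_pos
      have h1 : Tendsto (fun ω => π * β * Kcos ω) (nhdsWithin 0 (Ioi 0)) atTop :=
        hKcosTop.const_mul_atTop (by positivity)
      exact h1.inv_tendsto_atTop.congr (fun ω => by
        rw [Pi.inv_apply, one_div])
    exact tendsto_of_tendsto_of_tendsto_of_le_of_le' tendsto_const_nhds hubT hlb hub
  -- integrability
  have hmeas : ∀ s, s ⊆ Ioi (0:ℝ) → MeasurableSet s → AEStronglyMeasurable r (volume.restrict s) :=
    fun s hs hms => (hrcont.mono hs).aestronglyMeasurable hms
  have hsmall : {ω : ℝ | |r ω| ≤ 1} ∈ nhdsWithin (0:ℝ) (Ioi 0) := by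
    have h1 := Metric.tendsto_nhds.1 hr0' 1 one_pos
    refine Filter.eventually_iff.1 (h1.mono (fun ω h => ?_))
    rw [Real.dist_eq, sub_zero] at h
    exact h.le
  obtain ⟨δ, hδmem, hδsub⟩ := mem_nhdsGT_iff_exists_Ioo_subset.1 hsmall
  have hδ0 : 0 < δ := hδmem
  set Dm : ℝ := max D δ with hDmdef
  have hDm0 : 0 < Dm := lt_of_lt_of_le hD0 (le_max_left _ _)
  have hi1 : IntegrableOn r (Ioo 0 δ) := by
    have hconst : IntegrableOn (fun _ : ℝ => (1:ℝ)) (Ioo 0 δ) volume :=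
      integrableOn_const measure_Ioo_lt_top.ne
    refine Integrable.mono' hconst (hmeas _ (fun x hx => hx.1) measurableSet_Ioo) ?_
    refine (ae_restrict_iff' measurableSet_Ioo).2 (ae_of_all _ (fun ω hω => ?_))
    rw [Real.norm_eq_abs]
    exact hδsub hω
  have hi2 : IntegrableOn r (Icc δ Dm) :=
    (hrcont.mono (fun x hx => lt_of_lt_of_le hδ0 hx.1)).integrableOn_Icc
  have hi3 : IntegrableOn r (Ioi Dm) := by
    set c3 : ℝ := (1 / (2 * π)) * (2 * β * B) / ((m/2)^2) with hc3def
    refine Integrable.mono'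
      ((integrableOn_Ioi_rpow_of_lt (by norm_num : (-2:ℝ) < -1) hDm0).const_mul c3)
      (hmeas _ (fun x hx => lt_trans hDm0 hx) measurableSet_Ioi) ?_
    refine (ae_restrict_iff' measurableSet_Ioi).2 (ae_of_all _ (fun ω hω => ?_))
    have hω0 : 0 < ω := lt_trans hDm0 hω
    have h1 : r ω ≤ (1 / (2 * π)) * (2 * β * B) / ((m * ω / 2)^2) :=
      hrbound ω (le_of_lt (lt_of_le_of_lt (le_max_left _ _) hω))
    have hrpow : ω ^ (-2:ℝ) = (ω^2)⁻¹ := by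
      rw [show (-2:ℝ) = -((2:ℕ):ℝ) by norm_num, Real.rpow_neg hω0.le, Real.rpow_natCast]
    have h2 : (1 / (2 * π)) * (2 * β * B) / ((m * ω / 2)^2) = c3 * ω ^ (-2:ℝ) := by
      have hsq : (m * ω / 2)^2 = (m/2)^2 * ω^2 := by ring
      rw [hrpow, hc3def, hsq, ← div_div, div_eq_mul_inv]
    rw [Real.norm_eq_abs, abs_of_nonneg (hr0 ω hω0)]
    linarith
  have hcover : Ioi (0:ℝ) ⊆ Ioo 0 δ ∪ (Icc δ Dm ∪ Ioi Dm) := by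
    intro x hx
    rcases lt_or_ge x δ with h | h
    · exact Or.inl ⟨hx, h⟩
    rcases le_or_gt x Dm with h2 | h2
    · exact Or.inr (Or.inl ⟨h, h2⟩)
    · exact Or.inr (Or.inr h2)
  exact ⟨hrcont, hr0', hratTop, (hi1.union (hi2.union hi3)).mono_set hcover⟩
end
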